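/- arXiv:1602.06411 — 8 statements merged into one kernel-verified Lean document; each statement's English description precedes it below -/
import Mathlib

section
/- For any even integer n ≥ 2, the edge set of the complete graph K_n on n vertices can be partitioned into n/2 Hamiltonian paths (i.e., there exist n/2 pairwise edge-disjoint paths, each visiting every vertex of K_n exactly once, whose edge sets together cover all edges of K_n). -/
open SimpleGraph

/-- Build a walk from a vertex sequence. -/
def walkOf {V : Type*} (G : SimpleGraph V) (f : ℕ → V) :
    ∀ (L : ℕ), (∀ j, j < L → G.Adj (f j) (f (j+1))) → G.Walk (f 0) (f L)
  | 0, _ => .nil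
  | L+1, h => (walkOf G f L (fun j hj => h j (by omega))).concat (h L (by omega))

lemma walkOf_support {V : Type*} (G : SimpleGraph V) (f : ℕ → V) (L : ℕ)
    (h : ∀ j, j < L → G.Adj (f j) (f (j+1))) :
    (walkOf G f L h).support = (List.range (L+1)).map f := by
  induction L with
  | zero => simp [walkOf, List.range_succ]
  | succ L ih =>
    rw [walkOf, SimpleGraph.Walk.support_concat, ih, List.range_succ (n := L+1)]
    simp [List.concat_eq_append]

lemma walkOf_edges {V : Type*} (G : SimpleGraph V) (f : ℕ → V) (L : ℕ)
    (h : ∀ j, j < L → G.Adj (f j) (f (j+1))) :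
    (walkOf G f L h).edges = (List.range L).map (fun j => s(f j, f (j+1))) := by
  induction L with
  | zero => simp [walkOf, List.range_succ]
  | succ L ih =>
    rw [walkOf, SimpleGraph.Walk.edges_concat, ih, List.range_succ (n := L)]
    simp [List.concat_eq_append]

/-- The zigzag sequence: `0, 1, -1, 2, -2, ...` in `ZMod (2k+2)`. -/
def zig (k : ℕ) (j : ℕ) : ZMod (2*k+2) :=
  if Even j then -((j/2 : ℕ) : ZMod (2*k+2)) else (((j+1)/2 : ℕ) : ZMod (2*k+2))

lemma cast_inj_of_lt {k : ℕ} {a b : ℕ} (ha : a < 2*k+2) (hb : b < 2*k+2)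
    (h : (a : ZMod (2*k+2)) = b) : a = b := by
  haveI : NeZero (2*k+2) := ⟨by omega⟩
  have := congrArg ZMod.val h
  rwa [ZMod.val_cast_of_lt ha, ZMod.val_cast_of_lt hb] at this

lemma zig_inj {k : ℕ} : ∀ a < 2*k+2, ∀ b < 2*k+2, zig k a = zig k b → a = b := by
  have key : ∀ a < 2*k+2, ∀ b < 2*k+2, Even a → ¬ Even b → zig k a ≠ zig k b := by
    intro a ha b hb hea heb h
    rw [zig, zig, if_pos hea, if_neg heb] at h
    have h0 : ((a/2 + (b+1)/2 : ℕ) : ZMod (2*k+2)) = 0 := by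
      push_cast
      rw [← h]; ring
    rw [ZMod.natCast_eq_zero_iff] at h0
    rw [Nat.even_iff] at hea heb
    have hpos : 0 < a/2 + (b+1)/2 := by omega
    have := Nat.le_of_dvd hpos h0
    omega
  intro a ha b hb h
  by_cases hea : Even a <;> by_cases heb : Even b <;>
    [skip; skip; skip; skip]
  · rw [zig, zig, if_pos hea, if_pos heb, neg_inj] at h
    have := cast_inj_of_lt (by omega) (by omega) h
    rw [Nat.even_iff] at hea heb
    omega
  · exact absurd h (key a ha b hb hea heb)
  · exact absurd h.symm (key b hb a ha heb hea)
  · rw [zig, zig, if_neg hea, if_neg heb] at h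
    have := cast_inj_of_lt (k := k) (by omega) (by omega) h
    rw [Nat.even_iff] at hea heb
    omega

lemma zig_surj {k : ℕ} (x : ZMod (2*k+2)) : ∃ j < 2*k+2, zig k j = x := by
  haveI : NeZero (2*k+2) := ⟨by omega⟩
  have hcard : ((Finset.range (2*k+2)).image (zig k)).card = 2*k+2 := by
    rw [Finset.card_image_of_injOn, Finset.card_range]
    intro a ha b hb hab
    exact zig_inj a (Finset.mem_range.mp ha) b (Finset.mem_range.mp hb) hab
  have : (Finset.range (2*k+2)).image (zig k) = Finset.univ := by
    apply Finset.eq_univ_of_card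
    rw [hcard, ZMod.card]
  have hx : x ∈ (Finset.range (2*k+2)).image (zig k) := by rw [this]; exact Finset.mem_univ x
  obtain ⟨j, hj, hjx⟩ := Finset.mem_image.mp hx
  exact ⟨j, Finset.mem_range.mp hj, hjx⟩

lemma zig_pair_sum {k : ℕ} (j : ℕ) :
    zig k j + zig k (j+1) = if Even j then 1 else 0 := by
  by_cases he : Even j
  · have heb : ¬ Even (j+1) := by simp [Nat.even_add_one, he]
    rw [zig, zig, if_pos he, if_neg heb, if_pos he]
    rw [Nat.even_iff] at he
    have : (j+1+1)/2 = j/2 + 1 := by omega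
    rw [this]
    push_cast
    ring
  · have heb : Even (j+1) := by simp [Nat.even_add_one, he]
    rw [zig, zig, if_neg he, if_pos heb, if_neg he]
    ring

theorem main_construction (k : ℕ) :
    ∃ (u v : Fin (k+1) → ZMod (2*k+2))
      (p : ∀ i : Fin (k+1), (⊤ : SimpleGraph (ZMod (2*k+2))).Walk (u i) (v i)),
      (∀ i, (p i).IsHamiltonian) ∧
      (∀ i j, i ≠ j → ∀ e, e ∈ (p i).edges → e ∉ (p j).edges) ∧
      (∀ e, e ∈ (⊤ : SimpleGraph (ZMod (2*k+2))).edgeSet ↔ ∃ i, e ∈ (p i).edges) := by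
  haveI : NeZero (2*k+2) := ⟨by omega⟩
  set f : Fin (k+1) → ℕ → ZMod (2*k+2) := fun i j => ((i : ℕ) : ZMod (2*k+2)) + zig k j with hf
  have hadj : ∀ (i : Fin (k+1)) j, j < 2*k+1 →
      (⊤ : SimpleGraph (ZMod (2*k+2))).Adj (f i j) (f i (j+1)) := by
    intro i j hj
    rw [SimpleGraph.top_adj]
    intro h
    have : zig k j = zig k (j+1) := by
      have := add_left_cancel h
      exact this
    have := zig_inj j (by omega) (j+1) (by omega) this
    omega
  classical
  let p : ∀ i : Fin (k+1), (⊤ : SimpleGraph (ZMod (2*k+2))).Walk (f i 0) (f i (2*k+1)) :=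
    fun i => walkOf _ (f i) (2*k+1) (hadj i)
  have hsupp : ∀ i, (p i).support = (List.range (2*k+2)).map (f i) := by
    intro i
    exact walkOf_support ⊤ (f i) (2*k+1) (hadj i)
  have hedges : ∀ i, (p i).edges = (List.range (2*k+1)).map (fun j => s(f i j, f i (j+1))) :=
    fun i => walkOf_edges _ _ _ _
  have hinj : ∀ i : Fin (k+1), ∀ a < 2*k+2, ∀ b < 2*k+2, f i a = f i b → a = b :=
    fun i a ha b hb h => zig_inj a ha b hb (add_left_cancel h)
  have hnodup : ∀ i, (p i).support.Nodup := by
    intro i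
    rw [hsupp]
    refine List.Nodup.map_on ?_ List.nodup_range
    intro x hx y hy hxy
    exact hinj i x (List.mem_range.mp hx) y (List.mem_range.mp hy) hxy
  have hham : ∀ i, (p i).IsHamiltonian := by
    intro i a
    obtain ⟨j, hj, hjx⟩ := zig_surj (k := k) (a - ((i : ℕ) : ZMod (2*k+2)))
    have hmem : a ∈ (p i).support := by
      rw [hsupp]
      refine List.mem_map.mpr ⟨j, List.mem_range.mpr hj, ?_⟩
      show ((i : ℕ) : ZMod (2*k+2)) + zig k j = a
      rw [hjx]; ring
    exact List.count_eq_one_of_mem (hnodup i) hmem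
  -- edge sums
  have hsum : ∀ (i : Fin (k+1)), ∀ e ∈ (p i).edges,
      ∃ c ≤ 1, Sym2.lift ⟨fun a b => a + b, fun a b => add_comm a b⟩ e
        = ((2*(i:ℕ)+c : ℕ) : ZMod (2*k+2)) := by
    intro i e he
    rw [hedges] at he
    obtain ⟨j, hj, rfl⟩ := List.mem_map.mp he
    have hlift : Sym2.lift ⟨fun a b => a + b, fun a b => add_comm a b⟩ s(f i j, f i (j+1))
        = f i j + f i (j+1) := Sym2.lift_mk _ _ _
    have hval : f i j + f i (j+1)
        = ((i:ℕ) : ZMod (2*k+2)) * 2 + (zig k j + zig k (j+1)) := by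
      show ((i : ℕ) : ZMod (2*k+2)) + zig k j + (((i : ℕ) : ZMod (2*k+2)) + zig k (j+1)) = _
      ring
    rw [zig_pair_sum] at hval
    by_cases hje : Even j
    · refine ⟨1, le_refl 1, ?_⟩
      rw [hlift, hval, if_pos hje]
      push_cast
      ring
    · refine ⟨0, by norm_num, ?_⟩
      rw [hlift, hval, if_neg hje]
      push_cast
      ring
  have hdisj : ∀ i j : Fin (k+1), i ≠ j → ∀ e, e ∈ (p i).edges → e ∉ (p j).edges := by
    intro i j hij e hei hej
    obtain ⟨c, hc, hce⟩ := hsum i e hei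
    obtain ⟨c', hc', hce'⟩ := hsum j e hej
    have hi := i.isLt
    have hjl := j.isLt
    have : (2*(i:ℕ)+c : ℕ) = (2*(j:ℕ)+c' : ℕ) :=
      cast_inj_of_lt (by omega) (by omega) (hce ▸ hce')
    have : (i : ℕ) = (j : ℕ) := by omega
    exact hij (Fin.ext this)
  refine ⟨fun i => f i 0, fun i => f i (2*k+1), p, hham, hdisj, ?_⟩
  -- coverage by counting
  have hpath : ∀ i, (p i).IsPath := fun i => SimpleGraph.Walk.IsPath.mk' (hnodup i)
  have hcard1 : ∀ i, (p i).edges.toFinset.card = 2*k+1 := by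
    intro i
    rw [List.toFinset_card_of_nodup (hpath i).isTrail.edges_nodup, hedges]
    simp
  set S : Finset (Sym2 (ZMod (2*k+2))) :=
    Finset.univ.biUnion (fun i : Fin (k+1) => (p i).edges.toFinset) with hS
  have hScard : S.card = (k+1)*(2*k+1) := by
    rw [hS, Finset.card_biUnion]
    · simp [hcard1, Finset.sum_const]
    · intro i _ j _ hij
      refine Finset.disjoint_left.mpr ?_
      intro e he hej
      exact hdisj i j hij e (List.mem_toFinset.mp he) (List.mem_toFinset.mp hej)
  have hsub : S ⊆ (⊤ : SimpleGraph (ZMod (2*k+2))).edgeFinset := by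
    intro e he
    obtain ⟨i, _, hei⟩ := Finset.mem_biUnion.mp he
    rw [SimpleGraph.mem_edgeFinset]
    exact (p i).edges_subset_edgeSet (List.mem_toFinset.mp hei)
  have hcard2 : (⊤ : SimpleGraph (ZMod (2*k+2))).edgeFinset.card = (k+1)*(2*k+1) := by
    rw [SimpleGraph.card_edgeFinset_top_eq_card_choose_two, ZMod.card, Nat.choose_two_right]
    have e1 : 2*k+2-1 = 2*k+1 := by omega
    rw [e1, show (2*k+2)*(2*k+1) = (k+1)*(2*k+1)*2 from by ring,
      Nat.mul_div_cancel _ (by norm_num)]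
  have hSeq : S = (⊤ : SimpleGraph (ZMod (2*k+2))).edgeFinset :=
    Finset.eq_of_subset_of_card_le hsub (by rw [hScard, hcard2])
  intro e
  constructor
  · intro he
    have : e ∈ S := by rw [hSeq, SimpleGraph.mem_edgeFinset]; exact he
    obtain ⟨i, _, hei⟩ := Finset.mem_biUnion.mp this
    exact ⟨i, List.mem_toFinset.mp hei⟩
  · rintro ⟨i, hei⟩
    exact (p i).edges_subset_edgeSet hei

/-- For any even integer `n ≥ 2`, the edge set of the complete graph `K_n`
on `n` vertices can be partitioned into `n/2` Hamiltonian paths: there exist `n/2` walks in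
`K_n`, each a Hamiltonian path (visiting every vertex exactly once), which are pairwise
edge-disjoint and whose edge sets together cover all edges of `K_n`. -/
theorem stmt_0 (n : ℕ) (hn : 2 ≤ n) (hev : Even n) :
    ∃ (u v : Fin (n / 2) → Fin n)
      (p : ∀ i : Fin (n / 2), (⊤ : SimpleGraph (Fin n)).Walk (u i) (v i)),
      (∀ i, (p i).IsHamiltonian) ∧
      (∀ i j, i ≠ j → ∀ e, e ∈ (p i).edges → e ∉ (p j).edges) ∧
      (∀ e, e ∈ (⊤ : SimpleGraph (Fin n)).edgeSet ↔ ∃ i, e ∈ (p i).edges) := by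
  obtain ⟨k, rfl⟩ : ∃ k, n = 2*k+2 := by
    obtain ⟨m, hm⟩ := hev
    exact ⟨m-1, by omega⟩
  rw [show (2*k+2)/2 = k+1 from by omega]
  exact main_construction k
end

section
/- Let n ≥ 2 be even and index the vertices of K_n by elements of Z/nZ as a_0, …, a_{n−1}. For each i ∈ {0, 1, …, (n−2)/2}, let p_i be the sequence of vertices (b_0, b_1, …, b_{n−1}) with b_k = a_{i + (−1)^k · ⌈k/2⌉} (indices mod n), i.e., p_i = (a_i, a_{i−1}, a_{i+1}, a_{i−2}, a_{i+2}, …, a_{i−n/2}). Then each p_i is a Hamiltonian path of K_n, for distinct i ≠ j the paths p_i and p_j have no edge in common, and the union of the edge sets of p_0, …, p_{(n−2)/2} is the entire edge set of K_n. -/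
def stmt1F (n k : ℕ) : ZMod n :=
  if Even k then ((k / 2 : ℕ) : ZMod n) else -(((k + 1) / 2 : ℕ) : ZMod n)

lemma stmt1F_diff (n k : ℕ) :
    stmt1F n (k+1) - stmt1F n k =
      if Even k then -((k+1 : ℕ) : ZMod n) else ((k+1 : ℕ) : ZMod n) := by
  by_cases hk : Even k
  · have hk2 : k % 2 = 0 := Nat.even_iff.mp hk
    have hk1 : ¬ Even (k+1) := by simp [Nat.even_iff, hk2, Nat.add_mod]
    rw [stmt1F, stmt1F, if_pos hk, if_neg hk1, if_pos hk]
    have h1 : (((k+1+1)/2 : ℕ) : ZMod n) + ((k/2 : ℕ) : ZMod n) = ((k+1 : ℕ) : ZMod n) := by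
      rw [← Nat.cast_add]; congr 1; omega
    linear_combination -h1
  · have hk2 : k % 2 = 1 := Nat.odd_iff.mp (Nat.not_even_iff_odd.mp hk)
    have hk1 : Even (k+1) := by simp [Nat.even_iff, hk2, Nat.add_mod]
    rw [stmt1F, stmt1F, if_pos hk1, if_neg hk, if_neg hk]
    have h1 : (((k+1)/2 : ℕ) : ZMod n) + (((k+1)/2 : ℕ) : ZMod n) = ((k+1 : ℕ) : ZMod n) := by
      rw [← Nat.cast_add]; congr 1; omega
    linear_combination h1

lemma stmt1F_sum (n k : ℕ) :
    stmt1F n k + stmt1F n (k+1) = if Even k then (-1 : ZMod n) else 0 := by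
  by_cases hk : Even k
  · have hk2 : k % 2 = 0 := Nat.even_iff.mp hk
    have hk1 : ¬ Even (k+1) := by simp [Nat.even_iff, hk2, Nat.add_mod]
    rw [stmt1F, stmt1F, if_pos hk, if_neg hk1, if_pos hk]
    have h1 : (((k+1+1)/2 : ℕ) : ZMod n) = ((k/2 : ℕ) : ZMod n) + 1 := by
      rw [show (k+1+1)/2 = k/2 + 1 from by omega]; push_cast; ring
    linear_combination -h1
  · have hk1 : Even (k+1) := Nat.even_add_one.mpr hk
    rw [stmt1F, stmt1F, if_pos hk1, if_neg hk, if_neg hk]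
    ring

lemma stmt1_cast_inj {n a c : ℕ} [NeZero n] (ha : a < n) (hc : c < n)
    (h : (a : ZMod n) = (c : ZMod n)) : a = c := by
  have := congrArg ZMod.val h
  rwa [ZMod.val_cast_of_lt ha, ZMod.val_cast_of_lt hc] at this

lemma stmt1_dvd {n a : ℕ} [NeZero n] (h : (a : ZMod n) = 0) : n ∣ a :=
  (ZMod.natCast_eq_zero_iff a n).mp h

lemma stmt1F_inj {n : ℕ} (hn : 2 ≤ n) (hev : n % 2 = 0) {k k' : ℕ}
    (hk : k < n) (hk' : k' < n) (h : stmt1F n k = stmt1F n k') : k = k' := by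
  haveI : NeZero n := ⟨by omega⟩
  rw [stmt1F, stmt1F] at h
  by_cases e : Even k <;> by_cases e' : Even k' <;>
    [rw [if_pos e, if_pos e'] at h; rw [if_pos e, if_neg e'] at h;
     rw [if_neg e, if_pos e'] at h; rw [if_neg e, if_neg e'] at h] <;>
    rw [Nat.even_iff] at e e'
  · have := stmt1_cast_inj (by omega) (by omega) h
    omega
  · have h0 : (((k/2 + (k'+1)/2 : ℕ)) : ZMod n) = 0 := by push_cast; linear_combination h
    have := Nat.le_of_dvd (by omega) (stmt1_dvd h0)
    omega
  · have h0 : (((k'/2 + (k+1)/2 : ℕ)) : ZMod n) = 0 := by push_cast; linear_combination -h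
    have := Nat.le_of_dvd (by omega) (stmt1_dvd h0)
    omega
  · have h1 : (((k+1)/2 : ℕ) : ZMod n) = (((k'+1)/2 : ℕ) : ZMod n) := by linear_combination -h
    have := stmt1_cast_inj (show (k+1)/2 < n by omega) (show (k'+1)/2 < n by omega) h1
    omega

lemma stmt1_exists {n : ℕ} (hn : 2 ≤ n) (hev : n % 2 = 0) (x y : ZMod n) (hxy : x ≠ y) :
    ∃ (c : ZMod n) (k : ℕ), k + 1 < n ∧ c + stmt1F n k = x ∧ c + stmt1F n (k+1) = y := by
  haveI : NeZero n := ⟨by omega⟩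
  set m := (y - x).val with hm
  have hm1 : 1 ≤ m :=
    Nat.one_le_iff_ne_zero.mpr fun h => sub_ne_zero.mpr hxy.symm ((ZMod.val_eq_zero _).mp h)
  have hm2 : m < n := ZMod.val_lt _
  have hdm : ((m : ℕ) : ZMod n) = y - x := ZMod.natCast_rightInverse _
  by_cases hme : m % 2 = 0
  · refine ⟨x + ((m/2 : ℕ) : ZMod n), m - 1, by omega, ?_, ?_⟩
    · rw [stmt1F, if_neg (by rw [Nat.even_iff]; omega), show m - 1 + 1 = m from by omega]
      ring
    · rw [show m - 1 + 1 = m from by omega]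
      rw [stmt1F, if_pos (Nat.even_iff.mpr hme)]
      have hmm : ((m/2 : ℕ) : ZMod n) + ((m/2 : ℕ) : ZMod n) = ((m : ℕ) : ZMod n) := by
        rw [← Nat.cast_add]; congr 1; omega
      linear_combination hmm + hdm
  · refine ⟨x - (((n-m-1)/2 : ℕ) : ZMod n), n - m - 1, by omega, ?_, ?_⟩
    · rw [stmt1F, if_pos (Nat.even_iff.mpr (by omega))]
      ring
    · rw [stmt1F, if_neg (by rw [Nat.even_iff]; omega)]
      have hc1 : (((n-m-1)/2 : ℕ) : ZMod n) + (((n-m-1+1+1)/2 : ℕ) : ZMod n)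
          = ((n - m : ℕ) : ZMod n) := by rw [← Nat.cast_add]; congr 1; omega
      have h2 : ((n - m : ℕ) : ZMod n) + ((m : ℕ) : ZMod n) = 0 := by
        rw [← Nat.cast_add, show n - m + m = n from by omega]; exact ZMod.natCast_self n
      linear_combination -hc1 - h2 + hdm

lemma stmt1_mirror {n : ℕ} (hn : 2 ≤ n) (hev : n % 2 = 0) (c : ZMod n) (k : ℕ) (hk : k + 1 < n) :
    s(c + ((n/2 : ℕ) : ZMod n) + stmt1F n (n-2-k), c + ((n/2 : ℕ) : ZMod n) + stmt1F n (n-2-k+1))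
      = s(c + stmt1F n k, c + stmt1F n (k+1)) := by
  haveI : NeZero n := ⟨by omega⟩
  have hA : c + ((n/2 : ℕ) : ZMod n) + stmt1F n (n-2-k) = c + stmt1F n (k+1) := by
    by_cases e : k % 2 = 0
    · rw [stmt1F, if_pos (Nat.even_iff.mpr (by omega)), stmt1F,
        if_neg (by rw [Nat.even_iff]; omega)]
      have h0 : ((n/2 + (n-2-k)/2 + (k+1+1)/2 : ℕ) : ZMod n) = 0 := by
        rw [show n/2 + (n-2-k)/2 + (k+1+1)/2 = n from by omega]; exact ZMod.natCast_self n
      push_cast at h0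
      linear_combination h0
    · rw [stmt1F, if_neg (by rw [Nat.even_iff]; omega), stmt1F,
        if_pos (Nat.even_iff.mpr (by omega))]
      have h1 : ((n/2 : ℕ) : ZMod n) = (((n-2-k+1)/2 : ℕ) : ZMod n) + (((k+1)/2 : ℕ) : ZMod n) := by
        rw [← Nat.cast_add]; congr 1; omega
      linear_combination h1
  have hB : c + ((n/2 : ℕ) : ZMod n) + stmt1F n (n-2-k+1) = c + stmt1F n k := by
    by_cases e : k % 2 = 0
    · rw [stmt1F, if_neg (by rw [Nat.even_iff]; omega), stmt1F,
        if_pos (Nat.even_iff.mpr e)]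
      have h1 : ((n/2 : ℕ) : ZMod n) = (((n-2-k+1+1)/2 : ℕ) : ZMod n) + ((k/2 : ℕ) : ZMod n) := by
        rw [← Nat.cast_add]; congr 1; omega
      linear_combination h1
    · rw [stmt1F, if_pos (Nat.even_iff.mpr (by omega)), stmt1F,
        if_neg (by rw [Nat.even_iff]; omega)]
      have h0 : ((n/2 + (n-2-k+1)/2 + (k+1)/2 : ℕ) : ZMod n) = 0 := by
        rw [show n/2 + (n-2-k+1)/2 + (k+1)/2 = n from by omega]; exact ZMod.natCast_self n
      push_cast at h0
      linear_combination h0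
  rw [hA, hB]
  exact Sym2.eq_swap

/-- For even `n ≥ 2`, index the vertices of `K_n` by `ZMod n`.
For `i ∈ {0, …, (n-2)/2}` let `p_i` be the vertex sequence `b i 0, b i 1, …, b i (n-1)` with
`b i k = i + (-1)^k * ⌈k/2⌉`, i.e. `b i k = i + k/2` for even `k` and `b i k = i - (k+1)/2`
for odd `k`.  Then each `p_i` is a Hamiltonian path of `K_n` (consecutive vertices are
distinct, hence adjacent in `K_n`, and the sequence visits every vertex exactly once, i.e.
`k ↦ b i k` is a bijection from `Fin n` to `ZMod n`), for `i ≠ j` the paths `p_i` and `p_j`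
share no edge, and the edge sets of `p_0, …, p_{(n-2)/2}` together cover every edge of
`K_n`. -/
theorem stmt_1 (n : ℕ) (hn : 2 ≤ n) (hev : Even n)
    (b : ℕ → ℕ → ZMod n)
    (hb : ∀ i k, b i k =
      (i : ZMod n) +
        (if Even k then ((k / 2 : ℕ) : ZMod n) else -(((k + 1) / 2 : ℕ) : ZMod n))) :
    (∀ i ≤ (n - 2) / 2, ∀ k, k + 1 < n → b i k ≠ b i (k + 1)) ∧
    (∀ i ≤ (n - 2) / 2, Function.Bijective (fun k : Fin n => b i (k : ℕ))) ∧
    (∀ i ≤ (n - 2) / 2, ∀ j ≤ (n - 2) / 2, i ≠ j →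
      ∀ k k' : ℕ, k + 1 < n → k' + 1 < n →
        s(b i k, b i (k + 1)) ≠ s(b j k', b j (k' + 1))) ∧
    (∀ x y : ZMod n, x ≠ y →
      ∃ i ≤ (n - 2) / 2, ∃ k : ℕ, k + 1 < n ∧ s(x, y) = s(b i k, b i (k + 1))) := by
  haveI : NeZero n := ⟨by omega⟩
  have hev2 : n % 2 = 0 := Nat.even_iff.mp hev
  have hbF : ∀ i k, b i k = (i : ZMod n) + stmt1F n k := fun i k => hb i k
  refine ⟨?_, ?_, ?_, ?_⟩
  · -- consecutive vertices distinct
    intro i hi k hk h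
    rw [hbF, hbF] at h
    have h0 : stmt1F n (k+1) - stmt1F n k = 0 := by linear_combination -h
    rw [stmt1F_diff] at h0
    have hz : ((k+1 : ℕ) : ZMod n) = 0 := by
      by_cases e : Even k
      · rw [if_pos e] at h0; linear_combination -h0
      · rw [if_neg e] at h0; exact h0
    have := Nat.le_of_dvd (by omega) (stmt1_dvd hz)
    omega
  · -- bijective
    intro i hi
    rw [Fintype.bijective_iff_injective_and_card]
    refine ⟨?_, by simp [ZMod.card]⟩
    intro k k' h
    simp only [hbF] at h
    exact Fin.ext (stmt1F_inj hn hev2 k.isLt k'.isLt (by linear_combination h))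
  · -- edge-disjoint
    intro i hi j hj hij k k' hk hk' h
    rw [hbF, hbF, hbF, hbF, Sym2.eq_iff] at h
    have hsum : stmt1F n k + stmt1F n (k+1) + 2*(i:ZMod n)
        = stmt1F n k' + stmt1F n (k'+1) + 2*(j:ZMod n) := by
      rcases h with ⟨h1, h2⟩ | ⟨h1, h2⟩ <;> linear_combination h1 + h2
    have hdiffr : ((k+1:ℕ) : ZMod n) = ((k'+1:ℕ):ZMod n)
        ∨ ((k+1:ℕ):ZMod n) = -((k'+1:ℕ):ZMod n) := by
      have hd : stmt1F n (k+1) - stmt1F n k = stmt1F n (k'+1) - stmt1F n k' ∨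
          stmt1F n (k+1) - stmt1F n k = -(stmt1F n (k'+1) - stmt1F n k') := by
        rcases h with ⟨h1, h2⟩ | ⟨h1, h2⟩
        · exact Or.inl (by linear_combination h2 - h1)
        · exact Or.inr (by linear_combination h2 - h1)
      rw [stmt1F_diff, stmt1F_diff] at hd
      by_cases e : Even k <;> by_cases e' : Even k' <;>
        [rw [if_pos e, if_pos e'] at hd; rw [if_pos e, if_neg e'] at hd;
         rw [if_neg e, if_pos e'] at hd; rw [if_neg e, if_neg e'] at hd] <;>
      rcases hd with hd | hd <;>
        first
          | exact Or.inl (by linear_combination hd)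
          | exact Or.inl (by linear_combination -hd)
          | exact Or.inr (by linear_combination hd)
          | exact Or.inr (by linear_combination -hd)
    have hpar : k % 2 = k' % 2 := by
      rcases hdiffr with hd | hd
      · have := stmt1_cast_inj (show k+1<n by omega) (show k'+1<n by omega) hd
        omega
      · have h0 : ((k+1+(k'+1) : ℕ) : ZMod n) = 0 := by push_cast; push_cast at hd; linear_combination hd
        have hdvd := stmt1_dvd h0
        have h1 := Nat.le_of_dvd (by omega) hdvd
        have h2 : n ∣ (k+1+(k'+1)) - n := Nat.dvd_sub hdvd dvd_rfl
        have h3 : (k+1+(k'+1)) - n = 0 := by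
          by_contra hne
          have := Nat.le_of_dvd (by omega) h2
          omega
        omega
    have hFk : stmt1F n k + stmt1F n (k+1) = stmt1F n k' + stmt1F n (k'+1) := by
      rw [stmt1F_sum, stmt1F_sum]
      rcases Nat.even_or_odd k with e | e
      · have e1 := Nat.even_iff.mp e
        rw [if_pos e, if_pos (Nat.even_iff.mpr (by omega))]
      · have e1 := Nat.odd_iff.mp e
        rw [if_neg (by rw [Nat.even_iff]; omega), if_neg (by rw [Nat.even_iff]; omega)]
    have h2ij : ((2*i : ℕ) : ZMod n) = ((2*j : ℕ) : ZMod n) := by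
      push_cast
      linear_combination hsum - hFk
    have := stmt1_cast_inj (show 2*i < n by omega) (show 2*j < n by omega) h2ij
    omega
  · -- covering
    intro x y hxy
    obtain ⟨c, k, hk, hcx, hcy⟩ := stmt1_exists hn hev2 x y hxy
    by_cases hcv : c.val ≤ (n-2)/2
    · refine ⟨c.val, hcv, k, hk, ?_⟩
      have hvc : ((c.val : ℕ) : ZMod n) = c := ZMod.natCast_rightInverse c
      rw [hbF, hbF, hvc, hcx, hcy]
    · set c' := c + ((n/2 : ℕ) : ZMod n) with hc'
      have hval : c'.val ≤ (n-2)/2 := by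
        have h1 : ((n/2 : ℕ) : ZMod n).val = n/2 := ZMod.val_cast_of_lt (by omega)
        have h2 : c'.val = (c.val + n/2) % n := by rw [hc', ZMod.val_add, h1]
        have h3 : c.val < n := ZMod.val_lt c
        have h4 : (c.val + n/2) % n = c.val + n/2 - n := by
          rw [Nat.mod_eq_sub_mod (by omega), Nat.mod_eq_of_lt (by omega)]
        omega
      refine ⟨c'.val, hval, n-2-k, by omega, ?_⟩
      have hvc : ((c'.val : ℕ) : ZMod n) = c' := ZMod.natCast_rightInverse c'
      rw [hbF, hbF, hvc, hc', stmt1_mirror hn hev2 c k hk, hcx, hcy]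
end

section
/- Let n ≥ 2 and let 𝒢 be the simple temporal graph whose underlying graph is the complete graph K_n and in which every edge carries the single time label 1. Then 𝒢 is strictly temporally connected, and for every edge e of K_n, the temporal graph obtained from 𝒢 by deleting e is not strictly temporally connected. In particular, there are temporal graphs on n vertices whose smallest strict temporal connectivity certificate has n(n−1)/2 = Ω(n²) edges. -/
/-- Strict temporal reachability: `SReach A u t v` holds iff there is a strict temporal path
(a walk whose temporal edges carry strictly increasing time labels) from `u` to `v` in the
set `A` of temporal edges, all of whose labels are strictly greater than `t`. -/
inductive SReach {V : Type*} (A : Set (Sym2 V × ℕ)) : V → ℕ → V → Prop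
  | refl (u : V) (t : ℕ) : SReach A u t u
  | step {u v w : V} {t t' : ℕ} :
      (s(u, v), t') ∈ A → t < t' → SReach A v t' w → SReach A u t w

/-- A set of temporal edges is strictly temporally connected iff every ordered pair of
distinct vertices is joined by a strict temporal path (a first temporal edge followed by a
strict temporal path with strictly larger labels). -/
def StrictlyTConnected {V : Type*} (A : Set (Sym2 V × ℕ)) : Prop :=
  ∀ u v : V, u ≠ v → ∃ (x : V) (t : ℕ), (s(u, x), t) ∈ A ∧ SReach A x t v

lemma sreach_eq {V : Type*} {A : Set (Sym2 V × ℕ)}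
    (hA : ∀ q ∈ A, q.2 = 1) {x : V} {t : ℕ} {v : V}
    (h : SReach A x t v) (ht : 1 ≤ t) : x = v := by
  cases h with
  | refl => rfl
  | step hmem hlt _ =>
    have := hA _ hmem
    omega

/-- For `n ≥ 2`, the simple temporal graph whose underlying graph is `K_n`
and in which every edge carries the single time label `1` is strictly temporally connected,
deleting any single edge destroys strict temporal connectivity, and hence its only strict
temporal connectivity certificate is the whole graph, which has `n(n-1)/2` edges. -/
theorem stmt_4 (n : ℕ) (hn : 2 ≤ n) :
    StrictlyTConnected {q : Sym2 (Fin n) × ℕ |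
        q.1 ∈ (⊤ : SimpleGraph (Fin n)).edgeSet ∧ q.2 = 1} ∧
    (∀ e ∈ (⊤ : SimpleGraph (Fin n)).edgeSet,
      ¬ StrictlyTConnected ({q : Sym2 (Fin n) × ℕ |
          q.1 ∈ (⊤ : SimpleGraph (Fin n)).edgeSet ∧ q.2 = 1} \ {(e, 1)})) ∧
    (∀ B ⊆ {q : Sym2 (Fin n) × ℕ | q.1 ∈ (⊤ : SimpleGraph (Fin n)).edgeSet ∧ q.2 = 1},
      StrictlyTConnected B →
        B = {q : Sym2 (Fin n) × ℕ | q.1 ∈ (⊤ : SimpleGraph (Fin n)).edgeSet ∧ q.2 = 1}) ∧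
    (⊤ : SimpleGraph (Fin n)).edgeFinset.card = n * (n - 1) / 2 := by
  set A : Set (Sym2 (Fin n) × ℕ) :=
    {q : Sym2 (Fin n) × ℕ | q.1 ∈ (⊤ : SimpleGraph (Fin n)).edgeSet ∧ q.2 = 1} with hA
  have hAone : ∀ q ∈ A, q.2 = 1 := fun q hq => hq.2
  refine ⟨?_, ?_, ?_, ?_⟩
  · intro u v huv
    exact ⟨v, 1, ⟨by simpa using huv, rfl⟩, SReach.refl v 1⟩
  · intro e he hcon
    induction e using Sym2.inductionOn with
    | hf a b =>
      have hab : a ≠ b := by simpa using he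
      obtain ⟨x, t, hmem, hre⟩ := hcon a b hab
      have ht : t = 1 := hmem.1.2
      subst ht
      have hx : x = b := sreach_eq (fun q hq => hAone q hq.1) hre le_rfl
      subst hx
      exact hmem.2 (by simp [A, hab])
  · intro B hB hcon
    apply Set.Subset.antisymm hB
    rintro ⟨q, t⟩ ⟨hq, ht⟩
    induction q using Sym2.inductionOn with
    | hf a b =>
      have hab : a ≠ b := by simpa using hq
      obtain ⟨x, t', hmem, hre⟩ := hcon a b hab
      have ht' : t' = 1 := (hB hmem).2
      subst ht'
      have hx : x = b := sreach_eq (fun q hq => hAone q (hB hq)) hre le_rfl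
      subst hx
      subst ht
      exact hmem
  · rw [SimpleGraph.card_edgeFinset_top_eq_card_choose_two]
    simp [Nat.choose_two_right]
end

section
/- Let 𝒢 be a temporal graph on n vertices with nonnegative weights w(e,t) on its temporal edges, let r be a vertex, and let T' be any spanning subgraph of 𝒢 that is temporally r-connected. Then there exists a spanning subgraph T of 𝒢 such that: (i) T is temporally r-connected; (ii) T uses at most one time label on each edge (i.e., T is a simple temporal graph); (iii) the set of edges of the underlying graph used by T forms a tree (so T has at most n−1 temporal edges); and (iv) the total weight of T is at most the total weight of T'. -/
/-- Temporal reachability: `TReach A u t v` holds iff there is a temporal path (a walk whose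
temporal edges carry non-decreasing time labels) from `u` to `v` in the set `A` of temporal
edges, all of whose labels are at least `t`. -/
inductive TReach {V : Type*} (A : Set (Sym2 V × ℕ)) : V → ℕ → V → Prop
  | refl (u : V) (t : ℕ) : TReach A u t u
  | step {u v w : V} {t t' : ℕ} :
      (s(u, v), t') ∈ A → t ≤ t' → TReach A v t' w → TReach A u t w

open SimpleGraph

inductive TRB {V : Type*} (A : Set (Sym2 V × ℕ)) : V → ℕ → V → ℕ → Prop
  | refl (u : V) (t b : ℕ) : TRB A u t u b
  | step {u v w : V} {t t' b : ℕ} :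
      (s(u, v), t') ∈ A → t ≤ t' → t' ≤ b → TRB A v t' w b → TRB A u t w b

namespace TRB

variable {V : Type*} {A A' : Set (Sym2 V × ℕ)} {u v : V} {t b b' : ℕ}

theorem mono_set (hAA : A ⊆ A') (h : TRB A u t v b) : TRB A' u t v b := by
  induction h with
  | refl => exact .refl _ _ _
  | step he ht hb _ ih => exact .step (hAA he) ht hb ih

theorem mono_b (hb : b ≤ b') (h : TRB A u t v b) : TRB A u t v b' := by
  induction h with
  | refl => exact .refl _ _ _
  | step he ht hbb _ ih => exact .step he ht (hbb.trans hb) (ih hb)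

theorem toTReach (h : TRB A u t v b) : TReach A u t v := by
  induction h with
  | refl => exact .refl _ _
  | step he ht _ _ ih => exact .step he ht ih

theorem snoc {x y : V} {t'' : ℕ} (h : TRB A u t x b) (he : (s(x, y), t'') ∈ A)
    (hb : b ≤ t'') (ht : t ≤ t'') : TRB A u t y t'' := by
  induction h with
  | refl u t b => exact .step he ht le_rfl (.refl _ _ _)
  | @step u v w t t' bb he' ht' hb' _ ih =>
      exact .step he' ht' (hb'.trans hb) (ih he hb (hb'.trans hb))

end TRB

theorem TReach.toTRB {V : Type*} {F : Finset (Sym2 V × ℕ)} {u v : V} {t : ℕ}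
    (h : TReach (↑F : Set (Sym2 V × ℕ)) u t v) :
    TRB (↑F : Set (Sym2 V × ℕ)) u t v (F.sup Prod.snd) := by
  induction h with
  | refl => exact .refl _ _ _
  | @step u v w t t' he ht _ ih =>
      exact .step he ht (Finset.le_sup (f := Prod.snd) he) ih

theorem exists_last_edge {V : Type*} {G : SimpleGraph V} {u v : V} (p : G.Walk u v)
    (huv : u ≠ v) : ∃ z, G.Adj z v ∧ s(z, v) ∈ p.edges := by
  induction p with
  | nil => exact absurd rfl huv
  | @cons a b c h q ih =>
      by_cases hbc : b = c
      · subst hbc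
        exact ⟨a, h, by simp⟩
      · obtain ⟨z, hz, hze⟩ := ih hbc
        exact ⟨z, hz, by simp [hze]⟩

theorem pendant_acyclic {V : Type*} [DecidableEq V] {G : SimpleGraph V} (hG : G.IsAcyclic)
    {x y : V} (hxy : x ≠ y) (hy : ∀ z, ¬ G.Adj y z) :
    (G ⊔ SimpleGraph.fromEdgeSet {s(x, y)}).IsAcyclic := by
  set G' := G ⊔ SimpleGraph.fromEdgeSet {s(x, y)} with hG'
  have hadj : ∀ z : V, G'.Adj y z → z = x := by
    intro z hz
    rcases hz with hz | hz
    · exact absurd hz (hy z)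
    · rw [fromEdgeSet_adj] at hz
      rcases Sym2.eq_iff.mp hz.1 with ⟨h1, h2⟩ | ⟨h1, h2⟩
      · exact absurd h1.symm hxy
      · exact h2
  have aux : ∀ (c : G'.Walk y y), ¬ c.IsCycle := by
    intro c hc
    cases c with
    | nil => exact Walk.IsCycle.not_of_nil hc
    | cons h p =>
        rename_i v
        have hv : v = x := hadj v h
        rw [Walk.cons_isCycle_iff] at hc
        obtain ⟨z, hz, hze⟩ := exists_last_edge p (hv ▸ hxy)
        rw [hadj z hz.symm, ← hv, Sym2.eq_swap] at hze
        exact hc.2 hze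
  intro v c hc
  by_cases hyv : y ∈ c.support
  · exact aux (c.rotate y hyv) (hc.rotate hyv)
  · have hce : ∀ e ∈ c.edges, e ∈ G.edgeSet := by
      intro e he
      have := c.edges_subset_edgeSet he
      rw [hG', edgeSet_sup] at this
      rcases this with h1 | h1
      · exact h1
      · exfalso
        rw [edgeSet_fromEdgeSet] at h1
        have : e = s(x, y) := h1.1
        subst this
        exact hyv (c.snd_mem_support_of_mem_edges he)
    exact hG (c.transfer G hce) (hc.transfer hce)

theorem treach_reachable {V : Type*} {Tf : Finset (Sym2 V × ℕ)}
    (hnd : ∀ q ∈ Tf, ¬ q.1.IsDiag) {u v : V} {t : ℕ}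
    (h : TReach (↑Tf : Set (Sym2 V × ℕ)) u t v) :
    (SimpleGraph.fromEdgeSet {e : Sym2 V | ∃ t : ℕ, (e, t) ∈ Tf}).Reachable u v := by
  induction h with
  | refl => exact Reachable.refl _
  | @step u v w t t' he ht _ ih =>
      have hne : u ≠ v := by
        have := hnd _ (Finset.mem_coe.mp he)
        simpa [Sym2.mk_isDiag_iff] using this
      have hadj : (SimpleGraph.fromEdgeSet {e : Sym2 V | ∃ t : ℕ, (e, t) ∈ Tf}).Adj u v := by
        rw [fromEdgeSet_adj]
        exact ⟨⟨t', Finset.mem_coe.mp he⟩, hne⟩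
      exact hadj.reachable.trans ih

theorem tgMain {V : Type*} [Fintype V] [DecidableEq V]
    (A : Finset (Sym2 V × ℕ)) (hA : ∀ q ∈ A, ¬ q.1.IsDiag) (r : V)
    (T' : Finset (Sym2 V × ℕ)) (hT'A : T' ⊆ A)
    (hT'conn : ∀ v : V, TReach (↑T' : Set (Sym2 V × ℕ)) r 0 v) :
    ∀ (k : ℕ) (D : Finset V) (T : Finset (Sym2 V × ℕ)) (a : V → ℕ),
      (Finset.univ \ D).card ≤ k →
      r ∈ D → T ⊆ T' →
      (∀ q ∈ T, ∀ z ∈ q.1, z ∈ D) →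
      (∀ v ∈ D, TRB (↑T : Set (Sym2 V × ℕ)) r 0 v (a v)) →
      (∀ v ∈ D, ∀ b, TRB (↑T' : Set (Sym2 V × ℕ)) r 0 v b → a v ≤ b) →
      (∀ q ∈ T, ∀ q' ∈ T, q.1 = q'.1 → q = q') →
      T.card + 1 = D.card →
      (SimpleGraph.fromEdgeSet {e : Sym2 V | ∃ t : ℕ, (e, t) ∈ T}).IsAcyclic →
      ∃ Tf, Tf ⊆ T' ∧ (∀ v, TReach (↑Tf : Set (Sym2 V × ℕ)) r 0 v) ∧
        (∀ q ∈ Tf, ∀ q' ∈ Tf, q.1 = q'.1 → q = q') ∧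
        (SimpleGraph.fromEdgeSet {e : Sym2 V | ∃ t : ℕ, (e, t) ∈ Tf}).IsTree ∧
        Tf.card + 1 = Fintype.card V := by
  intro k
  induction k with
  | zero =>
      intro D T a hcard hrD hTT' hend h4 h5 h7 hcardT hacyc
      have hD : ∀ v, v ∈ D := by
        intro v
        by_contra hv
        have hmem : v ∈ Finset.univ \ D := Finset.mem_sdiff.mpr ⟨Finset.mem_univ v, hv⟩
        have : 0 < (Finset.univ \ D).card := Finset.card_pos.mpr ⟨v, hmem⟩
        omega
      have hnd : ∀ q ∈ T, ¬ q.1.IsDiag := fun q hq => hA q (hT'A (hTT' hq))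
      have reach : ∀ v, (SimpleGraph.fromEdgeSet
          {e : Sym2 V | ∃ t : ℕ, (e, t) ∈ T}).Reachable r v :=
        fun v => treach_reachable hnd (h4 v (hD v)).toTReach
      have hconn : (SimpleGraph.fromEdgeSet {e : Sym2 V | ∃ t : ℕ, (e, t) ∈ T}).Connected :=
        (connected_iff _).mpr ⟨fun u v => (reach u).symm.trans (reach v), ⟨r⟩⟩
      have hDuniv : D = Finset.univ := Finset.eq_univ_iff_forall.mpr hD
      refine ⟨T, hTT', fun v => (h4 v (hD v)).toTReach, h7, ⟨hconn, hacyc⟩, ?_⟩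
      rw [hcardT, hDuniv, Finset.card_univ]
  | succ k ih =>
      intro D T a hcard hrD hTT' hend h4 h5 h7 hcardT hacyc
      by_cases hsmall : (Finset.univ \ D).card ≤ k
      · exact ih D T a hsmall hrD hTT' hend h4 h5 h7 hcardT hacyc
      · classical
        have hne : (Finset.univ \ D).Nonempty := Finset.card_pos.mp (by omega)
        obtain ⟨v₀, hv₀⟩ := hne
        have hv₀D : v₀ ∉ D := (Finset.mem_sdiff.mp hv₀).2
        -- crossing lemma
        have cross : ∀ u t v b, TRB (↑T' : Set (Sym2 V × ℕ)) u t v b → u ∈ D → v ∉ D →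
            TRB (↑T' : Set (Sym2 V × ℕ)) r 0 u t →
            ∃ x, x ∈ D ∧ ∃ y, y ∉ D ∧ ∃ t', ((s(x, y), t') ∈ T') ∧ t' ≤ b ∧
              TRB (↑T' : Set (Sym2 V × ℕ)) r 0 x t' := by
          intro u t v b h
          induction h with
          | refl u t b => intro hu hv _; exact absurd hu hv
          | @step u v w t t' b he ht hb htail ih2 =>
              intro hu hw hpre
              by_cases hvD : v ∈ D
              · exact ih2 hvD hw (hpre.snoc he ht (Nat.zero_le _))
              · exact ⟨u, hu, v, hvD, t', he, hb, hpre.mono_b ht⟩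
        -- candidate crossing edges
        set C := T'.filter (fun q => ∃ x y, q.1 = s(x, y) ∧ x ∈ D ∧ y ∉ D ∧
          TRB (↑T' : Set (Sym2 V × ℕ)) r 0 x q.2) with hC
        obtain ⟨x₀, hx₀, y₀, hy₀, t₀, he₀, _, hp₀⟩ :=
          cross r 0 v₀ (T'.sup Prod.snd) (hT'conn v₀).toTRB hrD hv₀D (TRB.refl r 0 0)
        have hCne : C.Nonempty :=
          ⟨(s(x₀, y₀), t₀), Finset.mem_filter.mpr ⟨he₀, x₀, y₀, rfl, hx₀, hy₀, hp₀⟩⟩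
        obtain ⟨qs, hqsC, hmin⟩ := C.exists_min_image Prod.snd hCne
        obtain ⟨hqsT', x, y, hq1, hxD, hyD, hpx⟩ := Finset.mem_filter.mp hqsC
        have hqs : qs = (s(x, y), qs.2) := Prod.ext hq1 rfl
        have hxyD : ¬ (s(x, y) : Sym2 V).IsDiag := by
          have := hA qs (hT'A hqsT')
          rwa [hq1] at this
        have hxy : x ≠ y := by simpa [Sym2.mk_isDiag_iff] using hxyD
        have haxt : a x ≤ qs.2 := h5 x hxD qs.2 hpx
        -- members of T avoid y
        have hyT : ∀ q ∈ T, y ∉ (q.1 : Sym2 V) := fun q hq hyq => hyD (hend q hq y hyq)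
        have hnewT : (s(x, y), qs.2) ∉ T := by
          intro hmem
          exact hyT _ hmem (Sym2.mem_mk_right x y)
        refine ih (insert y D) (insert (s(x, y), qs.2) T) (Function.update a y qs.2)
          ?_ ?_ ?_ ?_ ?_ ?_ ?_ ?_ ?_
        · -- card
          have h1 : (Finset.univ \ D).card = Fintype.card V - D.card := by
            rw [Finset.card_sdiff_of_subset (Finset.subset_univ D), Finset.card_univ]
          have h2 : (Finset.univ \ insert y D).card = Fintype.card V - (D.card + 1) := by
            rw [Finset.card_sdiff_of_subset (Finset.subset_univ _), Finset.card_univ,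
              Finset.card_insert_of_notMem hyD]
          have h3 : D.card ≤ Fintype.card V := Finset.card_le_univ D
          omega
        · exact Finset.mem_insert_of_mem hrD
        · exact Finset.insert_subset (hqs ▸ hqsT') hTT'
        · intro q hq z hz
          rcases Finset.mem_insert.mp hq with rfl | hq
          · rcases Sym2.mem_iff.mp hz with rfl | rfl
            · exact Finset.mem_insert_of_mem hxD
            · exact Finset.mem_insert_self _ _
          · exact Finset.mem_insert_of_mem (hend q hq z hz)
        · intro v hv
          have hsub : (↑T : Set (Sym2 V × ℕ)) ⊆ ↑(insert (s(x, y), qs.2) T) := by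
            intro q hq; exact Finset.mem_coe.mpr (Finset.mem_insert_of_mem hq)
          rcases Finset.mem_insert.mp hv with rfl | hv
          · rw [Function.update_self]
            exact (((h4 x hxD).mono_set hsub).mono_b haxt).snoc
              (Finset.mem_coe.mpr (Finset.mem_insert_self _ _)) le_rfl (Nat.zero_le _)
          · have hvy : v ≠ y := fun h => hyD (h ▸ hv)
            rw [Function.update_of_ne hvy]
            exact (h4 v hv).mono_set hsub
        · intro v hv b hb
          rcases Finset.mem_insert.mp hv with rfl | hv
          · rw [Function.update_self]
            obtain ⟨x₁, hx₁, y₁, hy₁, t₁, he₁, ht₁b, hp₁⟩ :=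
              cross r 0 v b hb hrD hyD (TRB.refl r 0 0)
            have hmem : (s(x₁, y₁), t₁) ∈ C :=
              Finset.mem_filter.mpr ⟨he₁, x₁, y₁, rfl, hx₁, hy₁, hp₁⟩
            exact le_trans (hmin _ hmem) ht₁b
          · have hvy : v ≠ y := fun h => hyD (h ▸ hv)
            rw [Function.update_of_ne hvy]
            exact h5 v hv b hb
        · intro q hq q' hq'
          rcases Finset.mem_insert.mp hq with rfl | hq <;>
            rcases Finset.mem_insert.mp hq' with h' | h'
          · intro _; rw [h']
          · intro heq
            exfalso
            exact hyT q' h' (heq ▸ Sym2.mem_mk_right x y)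
          · subst h'
            intro heq
            exfalso
            exact hyT _ hq (heq ▸ Sym2.mem_mk_right x y)
          · exact h7 q hq q' h'
        · rw [Finset.card_insert_of_notMem hnewT, Finset.card_insert_of_notMem hyD]
          omega
        · -- acyclicity
          have hset : {e : Sym2 V | ∃ t : ℕ, (e, t) ∈ insert (s(x, y), qs.2) T} =
              {e : Sym2 V | ∃ t : ℕ, (e, t) ∈ T} ∪ {s(x, y)} := by
            ext e
            simp only [Set.mem_setOf_eq, Finset.mem_insert, Set.mem_union,
              Set.mem_singleton_iff, Prod.mk.injEq]
            constructor
            · rintro ⟨t, ht⟩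
              rcases ht with ⟨he, _⟩ | ht
              · exact Or.inr he
              · exact Or.inl ⟨t, ht⟩
            · rintro (⟨t, ht⟩ | rfl)
              · exact ⟨t, Or.inr ht⟩
              · exact ⟨qs.2, Or.inl ⟨rfl, rfl⟩⟩
          rw [hset, fromEdgeSet_union]
          refine pendant_acyclic hacyc hxy ?_
          intro z hz
          rw [fromEdgeSet_adj] at hz
          obtain ⟨t, ht⟩ := hz.1
          exact hyT _ ht (Sym2.mem_mk_left y z)
/-- Let `𝒢` be a temporal graph on a finite vertex set (temporal edge set
`A`, loopless, with nonnegative weights `w`), `r` a vertex, and `T'` a temporally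
`r`-connected spanning subgraph of `𝒢`.  Then there is a spanning subgraph `T` of `𝒢` that:
(i) is temporally `r`-connected; (ii) uses at most one time label per underlying edge (is a
simple temporal graph); (iii) has underlying edge set forming a tree, and hence has at most
`n - 1` temporal edges; and (iv) has total weight at most that of `T'`. -/
theorem stmt_5 {V : Type*} [Fintype V] [DecidableEq V]
    (A : Finset (Sym2 V × ℕ)) (hA : ∀ q ∈ A, ¬ q.1.IsDiag)
    (w : Sym2 V × ℕ → ℝ) (hw : ∀ q ∈ A, 0 ≤ w q)
    (r : V)
    (T' : Finset (Sym2 V × ℕ)) (hT'A : T' ⊆ A)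
    (hT'conn : ∀ v : V, TReach (↑T' : Set (Sym2 V × ℕ)) r 0 v) :
    ∃ T ⊆ A,
      (∀ v : V, TReach (↑T : Set (Sym2 V × ℕ)) r 0 v) ∧
      (∀ (e : Sym2 V) (t t' : ℕ), (e, t) ∈ T → (e, t') ∈ T → t = t') ∧
      (SimpleGraph.fromEdgeSet {e : Sym2 V | ∃ t : ℕ, (e, t) ∈ T}).IsTree ∧
      T.card ≤ Fintype.card V - 1 ∧
      ∑ q ∈ T, w q ≤ ∑ q ∈ T', w q := by
  have hempty : {e : Sym2 V | ∃ t : ℕ, (e, t) ∈ (∅ : Finset (Sym2 V × ℕ))} = ∅ := by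
    ext e; simp
  obtain ⟨Tf, hsub, hconn, huniq, htree, hcardf⟩ :=
    tgMain A hA r T' hT'A hT'conn (Finset.univ \ {r}).card {r} ∅ (fun _ => 0)
      le_rfl (Finset.mem_singleton_self r) (Finset.empty_subset _)
      (by intro q hq; exact absurd hq (Finset.notMem_empty q))
      (by
        intro v hv
        rw [Finset.mem_singleton] at hv
        subst hv
        exact TRB.refl _ _ _)
      (by intro v _ b _; exact Nat.zero_le b)
      (by intro q hq; exact absurd hq (Finset.notMem_empty q))
      (by simp)
      (by rw [hempty, SimpleGraph.fromEdgeSet_empty]; exact SimpleGraph.isAcyclic_bot)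
  refine ⟨Tf, hsub.trans hT'A, hconn, ?_, htree, by omega, ?_⟩
  · intro e t t' h h'
    have := huniq (e, t) h (e, t') h' rfl
    exact congrArg Prod.snd this
  · exact Finset.sum_le_sum_of_subset_of_nonneg hsub (fun q hq _ => hw q (hT'A hq))
end

section
/- Let 𝒢 be a temporally connected temporal graph with nonnegative weights whose underlying graph is a tree. Then there exists a minimum-weight temporally connected spanning subgraph of 𝒢 that uses at most two time labels on each edge of the underlying tree. -/
/-- A set of temporal edges is temporally connected iff every ordered pair of vertices is
joined by a temporal path. -/
def TConnected {V : Type*} (A : Set (Sym2 V × ℕ)) : Prop :=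
  ∀ u v : V, TReach A u 0 v

namespace Stmt9

open SimpleGraph

variable {V : Type*} [DecidableEq V]

lemma treach_mono_time {A : Set (Sym2 V × ℕ)} {u v : V} {t t' : ℕ}
    (hle : t ≤ t') (h : TReach A u t' v) : TReach A u t v := by
  cases h with
  | refl => exact TReach.refl _ _
  | step hmem hle' hr => exact TReach.step hmem (hle.trans hle') hr

section Graph

variable {G : SimpleGraph V}

lemma no_cross (hGa : G.IsAcyclic) {u v : V} (huv : G.Adj u v) :
    ¬ (G.deleteEdges {s(u, v)}).Reachable u v := by
  have hb := (isAcyclic_iff_forall_edge_isBridge.mp hGa) (G.mem_edgeSet.2 huv)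
  exact isBridge_iff.mp hb

lemma side_total (hGc : G.Connected) (u v y : V) :
    (G.deleteEdges {s(u, v)}).Reachable u y ∨ (G.deleteEdges {s(u, v)}).Reachable v y := by
  have key : ∀ {a b : V} (_ : G.Walk a b),
      ((G.deleteEdges {s(u, v)}).Reachable u a ∨ (G.deleteEdges {s(u, v)}).Reachable v a) →
      ((G.deleteEdges {s(u, v)}).Reachable u b ∨ (G.deleteEdges {s(u, v)}).Reachable v b) := by
    intro a b p
    induction p with
    | nil => exact id
    | @cons a c b hac q ih =>
      intro h
      apply ih
      by_cases he : s(a, c) = s(u, v)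
      · rcases Sym2.eq_iff.1 he with ⟨rfl, rfl⟩ | ⟨rfl, rfl⟩
        · exact Or.inr (Reachable.refl _)
        · exact Or.inl (Reachable.refl _)
      · have hadj : (G.deleteEdges {s(u, v)}).Adj a c :=
          SimpleGraph.deleteEdges_adj.2 ⟨hac, by simpa using he⟩
        exact h.imp (fun hr => hr.trans hadj.reachable) (fun hr => hr.trans hadj.reachable)
  obtain ⟨p⟩ := hGc.preconnected u y
  exact key p (Or.inl (Reachable.refl _))

lemma cross_eq (hGa : G.IsAcyclic) {u v a b : V} (huv : G.Adj u v) (hab : G.Adj a b)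
    (ha : (G.deleteEdges {s(u, v)}).Reachable u a)
    (hb : (G.deleteEdges {s(u, v)}).Reachable v b) :
    a = u ∧ b = v := by
  by_cases he : s(a, b) = s(u, v)
  · rcases Sym2.eq_iff.1 he with ⟨h1, h2⟩ | ⟨h1, h2⟩
    · exact ⟨h1, h2⟩
    · exact absurd (h1 ▸ ha) (no_cross hGa huv)
  · have hadj : (G.deleteEdges {s(u, v)}).Adj a b :=
      SimpleGraph.deleteEdges_adj.2 ⟨hab, by simpa using he⟩
    exact absurd ((ha.trans hadj.reachable).trans hb.symm) (no_cross hGa huv)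

lemma nest (hGa : G.IsAcyclic) {u v w : V} (huv : G.Adj u v) (hvw : G.Adj v w)
    (hne : u ≠ w) {z : V} (hz : (G.deleteEdges {s(u, v)}).Reachable u z) :
    (G.deleteEdges {s(v, w)}).Reachable v z := by
  obtain ⟨p⟩ := hz
  have hvns : v ∉ p.support := by
    intro hvmem
    exact no_cross hGa huv ⟨p.takeUntil v hvmem⟩
  have hedges : ∀ e ∈ p.edges, e ∈ (G.deleteEdges {s(v, w)}).edgeSet := by
    intro e he
    have h1 : e ∈ (G.deleteEdges {s(u, v)}).edgeSet := p.edges_subset_edgeSet he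
    have h2 : e ≠ s(v, w) := by
      rintro rfl
      exact hvns (p.fst_mem_support_of_mem_edges he)
    induction e with
    | h a b =>
      rw [SimpleGraph.mem_edgeSet, SimpleGraph.deleteEdges_adj] at h1 ⊢
      exact ⟨h1.1, by simpa using h2⟩
  have hq : (G.deleteEdges {s(v, w)}).Reachable u z := ⟨p.transfer _ hedges⟩
  have hvu : (G.deleteEdges {s(v, w)}).Adj v u := by
    refine SimpleGraph.deleteEdges_adj.2 ⟨huv.symm, ?_⟩
    simp only [Set.mem_singleton_iff, Sym2.eq_iff]
    rintro (⟨-, rfl⟩ | ⟨rfl, -⟩)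
    · exact hne rfl
    · exact hvw.ne rfl
  exact hvu.reachable.trans hq

end Graph

section Temporal

variable {G : SimpleGraph V} {C : Finset (Sym2 V × ℕ)}

/-- Quality of a label `t` on edge `{u,v}` oriented `u → v`: it lies in `C` and starting
at time `t` from `v` one can reach every vertex on `v`'s side of the edge. -/
def Good (G : SimpleGraph V) (C : Finset (Sym2 V × ℕ)) (u v : V) (t : ℕ) : Prop :=
  (s(u, v), t) ∈ C ∧
    ∀ y : V, (G.deleteEdges {s(u, v)}).Reachable v y → TReach (↑C) v t y

/-- The chosen label for the oriented edge `u → v`. -/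
noncomputable def chosen (G : SimpleGraph V) (C : Finset (Sym2 V × ℕ)) (u v : V) : ℕ :=
  sSup {t | Good G C u v t}

lemma good_bdd (u v : V) : BddAbove {t | Good G C u v t} :=
  ⟨C.sup Prod.snd, fun _ ht => Finset.le_sup (f := Prod.snd) ht.1⟩

lemma good_chosen {u v : V} (h : {t | Good G C u v t}.Nonempty) :
    Good G C u v (chosen G C u v) :=
  Nat.sSup_mem h (good_bdd u v)

/-- Crossing lemma: a temporal path from the `u`-side to the `v`-side of the edge `{u,v}`
crosses it, yielding a label on `{u,v}` from which the target is still reachable. -/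
lemma cross' (hGc : G.Connected) (hGa : G.IsAcyclic)
    (hadjC : ∀ {a b : V} {t : ℕ}, (s(a, b), t) ∈ C → G.Adj a b)
    {u v : V} (huv : G.Adj u v) {x y : V} {t : ℕ} (h : TReach (↑C) x t y) :
    (G.deleteEdges {s(u, v)}).Reachable u x →
    (G.deleteEdges {s(u, v)}).Reachable v y →
    ∃ t', t ≤ t' ∧ (s(u, v), t') ∈ C ∧ TReach (↑C) v t' y := by
  induction h with
  | refl a s =>
    intro hx hy
    exact absurd (hx.trans hy.symm) (no_cross hGa huv)
  | @step a b c t₁ t₂ h1 h2 h3 ih =>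
    intro hx hy
    have hab : G.Adj a b := hadjC (Finset.mem_coe.1 h1)
    rcases side_total hGc u v b with hb | hb
    · obtain ⟨t', ht1, ht2, ht3⟩ := ih hb hy
      exact ⟨t', h2.trans ht1, ht2, ht3⟩
    · obtain ⟨rfl, rfl⟩ := cross_eq hGa huv hab hx hb
      exact ⟨t₂, h2, Finset.mem_coe.1 h1, h3⟩

lemma good_exists (hGc : G.Connected) (hGa : G.IsAcyclic)
    (hadjC : ∀ {a b : V} {t : ℕ}, (s(a, b), t) ∈ C → G.Adj a b)
    (hC : TConnected (↑C : Set (Sym2 V × ℕ)))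
    {u v : V} (huv : G.Adj u v) : {t | Good G C u v t}.Nonempty := by
  obtain ⟨t0, -, hmem0, -⟩ :=
    cross' hGc hGa hadjC huv (hC u v) (Reachable.refl _) (Reachable.refl _)
  have h01 : sInf {t | (s(u, v), t) ∈ C} ∈ {t | (s(u, v), t) ∈ C} :=
    Nat.sInf_mem ⟨t0, hmem0⟩
  refine ⟨sInf {t | (s(u, v), t) ∈ C}, h01, ?_⟩
  intro y hy
  obtain ⟨ty, -, hmemy, hry⟩ := cross' hGc hGa hadjC huv (hC u y) (Reachable.refl _) hy
  exact treach_mono_time (Nat.sInf_le hmemy) hry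

lemma chosen_mono (hGc : G.Connected) (hGa : G.IsAcyclic)
    (hadjC : ∀ {a b : V} {t : ℕ}, (s(a, b), t) ∈ C → G.Adj a b)
    (hC : TConnected (↑C : Set (Sym2 V × ℕ)))
    {u v w : V} (huv : G.Adj u v) (hvw : G.Adj v w) (hne : u ≠ w) :
    chosen G C u v ≤ chosen G C v w := by
  have hG1 : Good G C u v (chosen G C u v) := good_chosen (good_exists hGc hGa hadjC hC huv)
  set t := chosen G C u v with ht
  have hstep : ∀ z : V, (G.deleteEdges {s(v, w)}).Reachable w z →
      ∃ t', ((s(v, w), t') ∈ C ∧ t ≤ t') ∧ TReach (↑C) w t' z := by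
    intro z hz
    have hzv : (G.deleteEdges {s(u, v)}).Reachable v z := by
      rcases side_total hGc u v z with h | h
      · exact absurd ((nest hGa huv hvw hne h).trans hz.symm) (no_cross hGa hvw)
      · exact h
    have hreach : TReach (↑C) v t z := hG1.2 z hzv
    obtain ⟨t', h1, h2, h3⟩ := cross' hGc hGa hadjC hvw hreach (Reachable.refl _) hz
    exact ⟨t', ⟨h2, h1⟩, h3⟩
  obtain ⟨tw, hw1, -⟩ := hstep w (Reachable.refl _)
  have hSne : {t' | (s(v, w), t') ∈ C ∧ t ≤ t'}.Nonempty := ⟨tw, hw1⟩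
  have hmem := Nat.sInf_mem hSne
  have hgood : Good G C v w (sInf {t' | (s(v, w), t') ∈ C ∧ t ≤ t'}) := by
    refine ⟨hmem.1, fun z hz => ?_⟩
    obtain ⟨t', h1, h3⟩ := hstep z hz
    exact treach_mono_time (Nat.sInf_le h1) h3
  exact le_trans hmem.2 (le_csSup (good_bdd v w) hgood)

/-- The pruned temporal edge set: keep only chosen labels. -/
noncomputable def Btemp (G : SimpleGraph V) (C : Finset (Sym2 V × ℕ)) :
    Finset (Sym2 V × ℕ) :=
  @Finset.filter _
    (fun q => ∃ u v : V, G.Adj u v ∧ q.1 = s(u, v) ∧ q.2 = chosen G C u v)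
    (Classical.decPred _) C

lemma mem_btemp_iff {q : Sym2 V × ℕ} : q ∈ Btemp G C ↔
    q ∈ C ∧ ∃ u v : V, G.Adj u v ∧ q.1 = s(u, v) ∧ q.2 = chosen G C u v := by
  unfold Btemp
  exact @Finset.mem_filter _ _ (Classical.decPred _) _ _

lemma btemp_subset : Btemp G C ⊆ C := fun _ hq => (mem_btemp_iff.1 hq).1

lemma mem_btemp (hGc : G.Connected) (hGa : G.IsAcyclic)
    (hadjC : ∀ {a b : V} {t : ℕ}, (s(a, b), t) ∈ C → G.Adj a b)
    (hC : TConnected (↑C : Set (Sym2 V × ℕ)))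
    {u v : V} (huv : G.Adj u v) : (s(u, v), chosen G C u v) ∈ Btemp G C :=
  mem_btemp_iff.2 ⟨(good_chosen (good_exists hGc hGa hadjC hC huv)).1,
    u, v, huv, rfl, rfl⟩

lemma btemp_tc (hGc : G.Connected) (hGa : G.IsAcyclic)
    (hadjC : ∀ {a b : V} {t : ℕ}, (s(a, b), t) ∈ C → G.Adj a b)
    (hC : TConnected (↑C : Set (Sym2 V × ℕ))) :
    TConnected (↑(Btemp G C) : Set (Sym2 V × ℕ)) := by
  have aux : ∀ {a y : V} (p : G.Walk a y), p.IsPath → ∀ x0 : V, G.Adj x0 a →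
      x0 ∉ p.support → TReach (↑(Btemp G C)) a (chosen G C x0 a) y := by
    intro a y p
    induction p with
    | nil => intro _ x0 _ _; exact TReach.refl _ _
    | @cons a b y hab q ih =>
      intro hp x0 hx0a hx0s
      have hx0b : x0 ≠ b := by
        intro hcontra
        refine hx0s ?_
        rw [Walk.support_cons]
        exact List.mem_cons_of_mem _ (hcontra ▸ q.start_mem_support)
      refine TReach.step (Finset.mem_coe.2 (mem_btemp hGc hGa hadjC hC hab))
        (chosen_mono hGc hGa hadjC hC hx0a hab hx0b) ?_
      exact ih hp.of_cons a hab ((Walk.cons_isPath_iff hab q).1 hp).2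
  intro u v
  obtain ⟨p0⟩ := hGc.preconnected u v
  obtain ⟨p, hp⟩ := p0.toPath
  revert hp
  cases p with
  | nil => intro _; exact TReach.refl _ _
  | @cons a b y hub q =>
    intro hp
    refine TReach.step (Finset.mem_coe.2 (mem_btemp hGc hGa hadjC hC hub))
      (Nat.zero_le _) ?_
    exact aux q hp.of_cons u hub ((Walk.cons_isPath_iff hub q).1 hp).2

lemma btemp_card (e : Sym2 V) :
    ((Btemp G C).filter (fun q => q.1 = e)).card ≤ 2 := by
  rcases Finset.eq_empty_or_nonempty ((Btemp G C).filter (fun q => q.1 = e)) with h | ⟨q0, hq0⟩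
  · simp [h]
  · have hq0' := Finset.mem_filter.1 hq0
    obtain ⟨u, v, -, he1, -⟩ := (mem_btemp_iff.1 hq0'.1).2
    have heq : e = s(u, v) := by rw [← hq0'.2, he1]
    have hsub : (Btemp G C).filter (fun q => q.1 = e) ⊆
        insert (e, chosen G C u v) {(e, chosen G C v u)} := by
      intro q hq
      have h1 := Finset.mem_filter.1 hq
      obtain ⟨u', v', -, hq1, hq2⟩ := (mem_btemp_iff.1 h1.1).2
      have hs : s(u', v') = s(u, v) := by rw [← hq1, h1.2, heq]
      have hq' : q = (q.1, q.2) := rfl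
      rcases Sym2.eq_iff.1 hs with ⟨rfl, rfl⟩ | ⟨rfl, rfl⟩
      · refine Finset.mem_insert.2 (Or.inl ?_)
        rw [hq', h1.2, hq2]
      · refine Finset.mem_insert.2 (Or.inr (Finset.mem_singleton.2 ?_))
        rw [hq', h1.2, hq2]
    refine (Finset.card_le_card hsub).trans ?_
    exact (Finset.card_insert_le _ _).trans (by simp)

end Temporal

end Stmt9

/-- Let `𝒢` be a temporally connected temporal graph (temporal edge set
`A`, loopless, nonnegative weights `w`) whose underlying graph is a tree.  Then some
minimum-weight temporally connected spanning subgraph `B` of `𝒢` uses at most two time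
labels on each edge of the underlying tree. -/
theorem stmt_9 {V : Type*} [Fintype V] [DecidableEq V]
    (A : Finset (Sym2 V × ℕ)) (hA : ∀ q ∈ A, ¬ q.1.IsDiag)
    (w : Sym2 V × ℕ → ℝ) (hw : ∀ q ∈ A, 0 ≤ w q)
    (htree : (SimpleGraph.fromEdgeSet {e : Sym2 V | ∃ t : ℕ, (e, t) ∈ A}).IsTree)
    (hconn : TConnected (↑A : Set (Sym2 V × ℕ))) :
    ∃ B ⊆ A, TConnected (↑B : Set (Sym2 V × ℕ)) ∧
      (∀ C ⊆ A, TConnected (↑C : Set (Sym2 V × ℕ)) → ∑ q ∈ B, w q ≤ ∑ q ∈ C, w q) ∧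
      (∀ e : Sym2 V, (B.filter (fun q => q.1 = e)).card ≤ 2) := by
  classical
  set G : SimpleGraph V := SimpleGraph.fromEdgeSet {e : Sym2 V | ∃ t : ℕ, (e, t) ∈ A} with hG
  have hGc : G.Connected := htree.isConnected
  have hGa : G.IsAcyclic := htree.IsAcyclic
  -- any subset of A has tree adjacencies
  have hadj : ∀ {C : Finset (Sym2 V × ℕ)}, C ⊆ A →
      ∀ {a b : V} {t : ℕ}, (s(a, b), t) ∈ C → G.Adj a b := by
    intro C hCA a b t hmem
    have hmemA := hCA hmem
    refine (SimpleGraph.fromEdgeSet_adj _).2 ⟨⟨t, hmemA⟩, ?_⟩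
    intro h
    exact hA _ hmemA (Sym2.mk_isDiag_iff.2 h)
  -- the core pruning construction
  have core : ∀ C : Finset (Sym2 V × ℕ), C ⊆ A → TConnected (↑C : Set (Sym2 V × ℕ)) →
      ∃ B' ⊆ C, TConnected (↑B' : Set (Sym2 V × ℕ)) ∧
        ∀ e : Sym2 V, (B'.filter (fun q => q.1 = e)).card ≤ 2 := by
    intro C hCA hC
    exact ⟨Stmt9.Btemp G C, Stmt9.btemp_subset,
      Stmt9.btemp_tc hGc hGa (fun {a b t} h => hadj hCA h) hC,
      fun e => Stmt9.btemp_card e⟩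
  -- the family of candidate subgraphs
  set S : Finset (Finset (Sym2 V × ℕ)) :=
    A.powerset.filter (fun B => TConnected (↑B : Set (Sym2 V × ℕ)) ∧
      ∀ e : Sym2 V, (B.filter (fun q => q.1 = e)).card ≤ 2) with hS
  have hSne : S.Nonempty := by
    obtain ⟨B0, hB0A, hB0tc, hB0card⟩ := core A (le_refl A) hconn
    exact ⟨B0, Finset.mem_filter.2 ⟨Finset.mem_powerset.2 hB0A, hB0tc, hB0card⟩⟩
  obtain ⟨B, hBS, hBmin⟩ := Finset.exists_min_image S (fun B => ∑ q ∈ B, w q) hSne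
  have hB := Finset.mem_filter.1 hBS
  refine ⟨B, Finset.mem_powerset.1 hB.1, hB.2.1, ?_, hB.2.2⟩
  intro C hCA hC
  obtain ⟨B', hB'C, hB'tc, hB'card⟩ := core C hCA hC
  have hB'S : B' ∈ S := Finset.mem_filter.2
    ⟨Finset.mem_powerset.2 (hB'C.trans hCA), hB'tc, hB'card⟩
  refine (hBmin B' hB'S).trans ?_
  exact Finset.sum_le_sum_of_subset_of_nonneg hB'C
    (fun q hq _ => hw q (hCA hq))
end

section
/- Let 𝒢 be a temporal graph whose underlying graph is the cycle v_0, v_1, …, v_{n−1}, v_0 (indices mod n), and let 𝒢' be a spanning subgraph of 𝒢. Suppose 𝒢' contains a temporal path visiting v_i, v_{i+1}, …, v_j in this order, and that for some k ∈ {i, i+1, …, j}, 𝒢' also contains a temporal path visiting v_k, v_{k−1}, …, v_{j+2}, v_{j+1} in this order. Then for every p ∈ {i, i+1, …, k}, 𝒢' contains a temporal path from v_p to every other vertex of the cycle. -/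
/-- `FwdPath A i len t` says that `A` contains a temporal path that visits the cycle vertices
`v_i, v_{i+1}, …, v_{i+len}` in this (forward) order, the `k`-th edge being available at time
`t k`, with non-decreasing labels. -/
def FwdPath {n : ℕ} (A : Set (Sym2 (ZMod n) × ℕ)) (i : ZMod n) (len : ℕ) (t : ℕ → ℕ) : Prop :=
  (∀ k : ℕ, k + 1 < len → t k ≤ t (k + 1)) ∧
  (∀ k : ℕ, k < len → (s(i + (k : ZMod n), i + (k : ZMod n) + 1), t k) ∈ A)

/-- `BwdPath A j len t` says that `A` contains a temporal path that visits the cycle vertices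
`v_j, v_{j-1}, …, v_{j-len}` in this (backward) order, the `k`-th edge being available at
time `t k`, with non-decreasing labels. -/
def BwdPath {n : ℕ} (A : Set (Sym2 (ZMod n) × ℕ)) (j : ZMod n) (len : ℕ) (t : ℕ → ℕ) : Prop :=
  (∀ k : ℕ, k + 1 < len → t k ≤ t (k + 1)) ∧
  (∀ k : ℕ, k < len → (s(j - (k : ZMod n), j - (k : ZMod n) - 1), t k) ∈ A)

theorem treach_mono {V : Type*} {A : Set (Sym2 V × ℕ)} {u v : V} {t t' : ℕ}
    (h : TReach A u t v) (hle : t' ≤ t) : TReach A u t' v := by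
  induction h with
  | refl u t => exact TReach.refl u t'
  | step hmem h2 h3 ih => exact TReach.step hmem (hle.trans h2) h3

theorem fwd_reach {n : ℕ} {A : Set (Sym2 (ZMod n) × ℕ)} {i : ZMod n} {a : ℕ} {t : ℕ → ℕ}
    (h : FwdPath A i a t) :
    ∀ r d : ℕ, d + r ≤ a → TReach A (i + (d : ZMod n)) (t d) (i + ((d + r : ℕ) : ZMod n)) := by
  intro r
  induction r with
  | zero => intro d _; exact TReach.refl _ _
  | succ r ih =>
    intro d hd
    have hedge := h.2 d (by omega)
    refine TReach.step hedge le_rfl ?_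
    have e1 : i + (d : ZMod n) + 1 = i + ((d + 1 : ℕ) : ZMod n) := by push_cast; ring
    have e2 : ((d + (r + 1) : ℕ) : ZMod n) = (((d + 1) + r : ℕ) : ZMod n) := by push_cast; ring
    rw [e1, e2]
    rcases Nat.eq_zero_or_pos r with hr | hr
    · subst hr; simpa using TReach.refl (i + ((d + 1 : ℕ) : ZMod n)) (t d)
    · exact treach_mono (ih (d + 1) (by omega)) (h.1 d (by omega))

theorem bwd_reach {n : ℕ} {A : Set (Sym2 (ZMod n) × ℕ)} {j : ZMod n} {L : ℕ} {t : ℕ → ℕ}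
    (h : BwdPath A j L t) :
    ∀ r s : ℕ, s + r ≤ L → TReach A (j - (s : ZMod n)) (t s) (j - ((s + r : ℕ) : ZMod n)) := by
  intro r
  induction r with
  | zero => intro s _; exact TReach.refl _ _
  | succ r ih =>
    intro s hs
    have hedge := h.2 s (by omega)
    refine TReach.step hedge le_rfl ?_
    have e1 : j - (s : ZMod n) - 1 = j - ((s + 1 : ℕ) : ZMod n) := by push_cast; ring
    have e2 : ((s + (r + 1) : ℕ) : ZMod n) = (((s + 1) + r : ℕ) : ZMod n) := by push_cast; ring
    rw [e1, e2]
    rcases Nat.eq_zero_or_pos r with hr | hr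
    · subst hr; simpa using TReach.refl (j - ((s + 1 : ℕ) : ZMod n)) (t s)
    · exact treach_mono (ih (s + 1) (by omega)) (h.1 s (by omega))

/-- Let `𝒢` be a temporal graph whose underlying graph is the cycle
`v_0, …, v_{n-1}, v_0` (vertices `ZMod n`, temporal edge set `A` supported on cycle edges),
and let `A'` (the temporal edge set of a spanning subgraph `𝒢'`) be a subset of `A`.
Suppose `A'` contains a temporal path visiting `v_i, v_{i+1}, …, v_j` in this order (here
`j = i + a` with `a ≤ n - 1`), and that for `k = i + c` with `c ≤ a` it also contains a
temporal path visiting `v_k, v_{k-1}, …, v_{j+2}, v_{j+1}` in this order (a backward path of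
`c + n - a - 1` edges).  Then every vertex `v_p` with `p = i + d`, `d ≤ c`, has a temporal
path in `A'` to every other vertex of the cycle. -/
theorem stmt_10 (n : ℕ) (hn : 3 ≤ n)
    (A : Set (Sym2 (ZMod n) × ℕ))
    (hcyc : ∀ q ∈ A, ∃ i : ZMod n, q.1 = s(i, i + 1))
    (A' : Set (Sym2 (ZMod n) × ℕ)) (hsub : A' ⊆ A)
    (i : ZMod n) (a c : ℕ) (ha : a ≤ n - 1) (hc : c ≤ a)
    (tf tb : ℕ → ℕ)
    (hfwd : FwdPath A' i a tf)
    (hbwd : BwdPath A' (i + (c : ZMod n)) (c + n - a - 1) tb) :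
    ∀ d : ℕ, d ≤ c → ∀ v : ZMod n, TReach A' (i + (d : ZMod n)) 0 v := by
  haveI : NeZero n := ⟨by omega⟩
  intro d hd v
  set m : ℕ := (v - i).val with hmdef
  have hm : m < n := ZMod.val_lt _
  have hcast : ((m : ℕ) : ZMod n) = v - i := ZMod.natCast_rightInverse (v - i)
  have hv : i + ((m : ℕ) : ZMod n) = v := by rw [hcast]; ring
  rw [← hv]
  rcases le_or_gt d m with h1 | h1
  · rcases le_or_gt m a with h2 | h2
    · -- forward path
      have hfr := fwd_reach hfwd (m - d) d (by omega)
      have e : ((d + (m - d) : ℕ) : ZMod n) = ((m : ℕ) : ZMod n) := by congr 1; omega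
      rw [e] at hfr
      exact treach_mono hfr (Nat.zero_le _)
    · -- wrap-around backward path
      have hbr := bwd_reach hbwd (n + d - m) (c - d) (by omega)
      have e0 : (c - d) + (n + d - m) = c + n - m := by omega
      rw [e0] at hbr
      have e1 : i + (c : ZMod n) - ((c - d : ℕ) : ZMod n) = i + ((d : ℕ) : ZMod n) := by
        rw [Nat.cast_sub hd]; ring
      have e2 : i + (c : ZMod n) - ((c + n - m : ℕ) : ZMod n) = i + ((m : ℕ) : ZMod n) := by
        have : ((c + n - m : ℕ) : ZMod n) = (c : ZMod n) + (n : ℕ) - (m : ℕ) := by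
          rw [Nat.cast_sub (by omega)]; push_cast; ring
        rw [this, ZMod.natCast_self]; ring
      rw [e1, e2] at hbr
      exact treach_mono hbr (Nat.zero_le _)
  · -- backward path, no wrap
    have hbr := bwd_reach hbwd (d - m) (c - d) (by omega)
    have e0 : (c - d) + (d - m) = c - m := by omega
    rw [e0] at hbr
    have e1 : i + (c : ZMod n) - ((c - d : ℕ) : ZMod n) = i + ((d : ℕ) : ZMod n) := by
      rw [Nat.cast_sub hd]; ring
    have e2 : i + (c : ZMod n) - ((c - m : ℕ) : ZMod n) = i + ((m : ℕ) : ZMod n) := by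
      rw [Nat.cast_sub (by omega)]; ring
    rw [e1, e2] at hbr
    exact treach_mono hbr (Nat.zero_le _)
end

section
/- Let 𝒢 be a temporal graph whose underlying graph is the cycle v_0, …, v_{n−1}, v_0, and let 𝒢' be a temporally connected spanning subgraph of 𝒢. Then the vertex set of 𝒢 can be partitioned into sectors with respect to 𝒢', i.e., into contiguous arcs (v_i, v_{i+1}, …, v_j) such that for each arc there exists a vertex v_k with k ∉ {i, i+1, …, j−1} for which 𝒢' contains a temporal path visiting v_i, v_{i+1}, …, v_k in this order and a temporal path visiting v_j, v_{j−1}, …, v_{k+1} in this order. -/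
/-- `Sector A i len` says that the contiguous arc `(v_i, v_{i+1}, …, v_j)` with `j = i + len`
is a sector with respect to the temporal edge set `A`: there is a vertex `v_k`, `k = i + d`
with `len ≤ d ≤ n - 1` (so `k ∉ {i, …, j-1}`), such that `A` contains an increasing path
`(v_i, v_{i+1}, …, v_k)` and a decreasing path `(v_j, v_{j-1}, …, v_{k+1})`. -/
def Sector {n : ℕ} (A : Set (Sym2 (ZMod n) × ℕ)) (i : ZMod n) (len : ℕ) : Prop :=
  ∃ d : ℕ, len ≤ d ∧ d ≤ n - 1 ∧
    (∃ tf : ℕ → ℕ, FwdPath A i d tf) ∧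
    (∃ tb : ℕ → ℕ, BwdPath A (i + (len : ZMod n)) (len + n - d - 1) tb)


section AuxSectorProof

-- truncation
lemma fwdPath_trunc {n : ℕ} {A : Set (Sym2 (ZMod n) × ℕ)} {i : ZMod n} {d d' : ℕ} {t : ℕ → ℕ}
    (h : FwdPath A i d t) (hd : d' ≤ d) : FwdPath A i d' t :=
  ⟨fun k hk => h.1 k (by omega), fun k hk => h.2 k (by omega)⟩

lemma bwdPath_trunc {n : ℕ} {A : Set (Sym2 (ZMod n) × ℕ)} {j : ZMod n} {d d' : ℕ} {t : ℕ → ℕ}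
    (h : BwdPath A j d t) (hd : d' ≤ d) : BwdPath A j d' t :=
  ⟨fun k hk => h.1 k (by omega), fun k hk => h.2 k (by omega)⟩

lemma fwdPath_zero {n : ℕ} {A : Set (Sym2 (ZMod n) × ℕ)} {i : ZMod n} :
    FwdPath A i 0 (fun _ => 0) := ⟨fun k hk => by omega, fun k hk => by omega⟩

lemma bwdPath_zero {n : ℕ} {A : Set (Sym2 (ZMod n) × ℕ)} {j : ZMod n} :
    BwdPath A j 0 (fun _ => 0) := ⟨fun k hk => by omega, fun k hk => by omega⟩

-- drop first edge of a backward path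
lemma bwdPath_drop {n : ℕ} {A : Set (Sym2 (ZMod n) × ℕ)} {j : ZMod n} {d : ℕ} {t : ℕ → ℕ}
    (h : BwdPath A j d t) : BwdPath A (j - 1) (d - 1) (fun k => t (k + 1)) := by
  constructor
  · intro k hk; exact h.1 (k + 1) (by omega)
  · intro k hk
    have := h.2 (k + 1) (by omega)
    have hc : j - ((k + 1 : ℕ) : ZMod n) = j - 1 - (k : ZMod n) := by push_cast; ring
    rw [hc] at this
    exact this

lemma fwdPath_drop {n : ℕ} {A : Set (Sym2 (ZMod n) × ℕ)} {i : ZMod n} {d : ℕ} {t : ℕ → ℕ}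
    (h : FwdPath A i d t) : FwdPath A (i + 1) (d - 1) (fun k => t (k + 1)) := by
  constructor
  · intro k hk; exact h.1 (k + 1) (by omega)
  · intro k hk
    have := h.2 (k + 1) (by omega)
    have hc : i + ((k + 1 : ℕ) : ZMod n) = i + 1 + (k : ZMod n) := by push_cast; ring
    rw [hc] at this
    exact this

-- prepend
lemma fwdPath_prepend {n : ℕ} {A : Set (Sym2 (ZMod n) × ℕ)} {u : ZMod n} {d : ℕ} {t' : ℕ}
    {t : ℕ → ℕ} (hA : (s(u, u + 1), t') ∈ A) (h : FwdPath A (u + 1) d t)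
    (hle : 0 < d → t' ≤ t 0) :
    FwdPath A u (d + 1) (fun k => if k = 0 then t' else t (k - 1)) := by
  constructor
  · intro k hk
    match k with
    | 0 => simpa using hle (by omega)
    | m + 1 => simpa using h.1 m (by omega)
  · intro k hk
    match k with
    | 0 => simpa using hA
    | m + 1 =>
      have := h.2 m (by omega)
      have hc : u + ((m + 1 : ℕ) : ZMod n) = u + 1 + (m : ZMod n) := by push_cast; ring
      rw [hc]
      simpa using this

lemma bwdPath_prepend {n : ℕ} {A : Set (Sym2 (ZMod n) × ℕ)} {u : ZMod n} {d : ℕ} {t' : ℕ}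
    {t : ℕ → ℕ} (hA : (s(u, u - 1), t') ∈ A) (h : BwdPath A (u - 1) d t)
    (hle : 0 < d → t' ≤ t 0) :
    BwdPath A u (d + 1) (fun k => if k = 0 then t' else t (k - 1)) := by
  constructor
  · intro k hk
    match k with
    | 0 => simpa using hle (by omega)
    | m + 1 => simpa using h.1 m (by omega)
  · intro k hk
    match k with
    | 0 => simpa using hA
    | m + 1 =>
      have := h.2 m (by omega)
      have hc : u - ((m + 1 : ℕ) : ZMod n) = u - 1 - (m : ZMod n) := by push_cast; ring
      rw [hc]
      simpa using this

lemma extract {n : ℕ} (hn : 3 ≤ n) {A : Set (Sym2 (ZMod n) × ℕ)}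
    (hcyc : ∀ q ∈ A, ∃ i : ZMod n, q.1 = s(i, i + 1)) :
    ∀ {u : ZMod n} {t : ℕ} {v : ZMod n}, TReach A u t v →
    ∃ (d : ℕ) (tl : ℕ → ℕ), (0 < d → t ≤ tl 0) ∧
      ((v = u + (d : ZMod n) ∧ FwdPath A u d tl) ∨
       (v = u - (d : ZMod n) ∧ BwdPath A u d tl)) := by
  intro u t v h
  induction h with
  | refl u t =>
    exact ⟨0, fun _ => 0, fun h0 => absurd h0 (by omega), Or.inl ⟨by simp, fwdPath_zero⟩⟩
  | @step u v w t t' hA hle _ ih =>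
    obtain ⟨d, tl, htl, hcase⟩ := ih
    -- the edge s(u,v) is a cycle edge: v = u + 1 or v = u - 1
    obtain ⟨i, hi⟩ := hcyc _ hA
    simp only at hi
    have hne : (1 : ZMod n) ≠ 0 := by
      have : ((1 : ℕ) : ZMod n) ≠ ((0 : ℕ) : ZMod n) := by
        intro hc
        have := (ZMod.natCast_eq_natCast_iff 1 0 n).mp hc
        simp [Nat.ModEq] at this
        omega
      simpa using this
    have hv : v = u + 1 ∨ v = u - 1 := by
      rw [Sym2.eq_iff] at hi
      rcases hi with ⟨h1, h2⟩ | ⟨h1, h2⟩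
      · left; rw [h2, ← h1]
      · right; rw [h2, h1]; ring
    rcases hv with hv | hv
    · subst hv
      rcases hcase with ⟨hw, hp⟩ | ⟨hw, hp⟩
      · -- extend forward path
        refine ⟨d + 1, _, ?_, Or.inl ⟨?_, fwdPath_prepend hA hp htl⟩⟩
        · intro _; simp; exact hle
        · rw [hw]; push_cast; ring
      · -- backward path from u+1: drop first vertex
        rcases Nat.eq_zero_or_pos d with hd | hd
        · -- w = u + 1 : single forward edge
          subst hd
          refine ⟨1, fun _ => t', fun _ => hle, Or.inl ⟨?_, ?_, ?_⟩⟩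
          · rw [hw]; simp
          · intro k hk; omega
          · intro k hk
            interval_cases k
            simpa using hA
        · refine ⟨d - 1, fun k => tl (k + 1), ?_, Or.inr ⟨?_, ?_⟩⟩
          · intro hd1
            have h1 : t' ≤ tl 0 := htl hd
            have h2 : tl 0 ≤ tl 1 := hp.1 0 (by omega)
            show t ≤ tl 1
            omega
          · rw [hw]
            have : ((d - 1 : ℕ) : ZMod n) = (d : ZMod n) - 1 := by
              have : d - 1 + 1 = d := by omega
              calc ((d - 1 : ℕ) : ZMod n) = ((d - 1 + 1 : ℕ) : ZMod n) - 1 := by push_cast; ring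
                _ = (d : ZMod n) - 1 := by rw [this]
            rw [this]; ring
          · have := bwdPath_drop hp
            have he : u + 1 - 1 = u := by ring
            rwa [he] at this
    · subst hv
      rcases hcase with ⟨hw, hp⟩ | ⟨hw, hp⟩
      · -- forward path from u-1: drop first vertex
        rcases Nat.eq_zero_or_pos d with hd | hd
        · subst hd
          refine ⟨1, fun _ => t', fun _ => hle, Or.inr ⟨?_, ?_, ?_⟩⟩
          · rw [hw]; simp
          · intro k hk; omega
          · intro k hk
            interval_cases k
            simpa [Sym2.eq_swap] using hA
        · refine ⟨d - 1, fun k => tl (k + 1), ?_, Or.inl ⟨?_, ?_⟩⟩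
          · intro hd1
            have h1 : t' ≤ tl 0 := htl hd
            have h2 : tl 0 ≤ tl 1 := hp.1 0 (by omega)
            show t ≤ tl 1
            omega
          · rw [hw]
            have : ((d - 1 : ℕ) : ZMod n) = (d : ZMod n) - 1 := by
              have hd1 : d - 1 + 1 = d := by omega
              calc ((d - 1 : ℕ) : ZMod n) = ((d - 1 + 1 : ℕ) : ZMod n) - 1 := by push_cast; ring
                _ = (d : ZMod n) - 1 := by rw [hd1]
            rw [this]; ring
          · have := fwdPath_drop hp
            have he : u - 1 + 1 = u := by ring
            rwa [he] at this
      · -- extend backward path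
        refine ⟨d + 1, _, ?_, Or.inr ⟨?_, bwdPath_prepend (by simpa [Sym2.eq_swap] using hA) hp htl⟩⟩
        · intro _; simp; exact hle
        · rw [hw]; push_cast; ring

lemma singleton_sector {n : ℕ} (hn : 3 ≤ n) {A : Set (Sym2 (ZMod n) × ℕ)}
    (hcyc : ∀ q ∈ A, ∃ i : ZMod n, q.1 = s(i, i + 1))
    (hconn : TConnected A) (i : ZMod n) : Sector A i 0 := by
  haveI : NeZero n := ⟨by omega⟩
  classical
  by_cases hfull : ∃ tf : ℕ → ℕ, FwdPath A i (n - 1) tf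
  · refine ⟨n - 1, by omega, le_refl _, hfull, fun _ => 0, ?_⟩
    have : 0 + n - (n - 1) - 1 = 0 := by omega
    rw [this]
    exact bwdPath_zero
  · -- least length with no forward path
    have hex : ∃ m, ¬ ∃ tf : ℕ → ℕ, FwdPath A i m tf := ⟨n - 1, hfull⟩
    set m := Nat.find hex with hm
    have hms : ¬ ∃ tf : ℕ → ℕ, FwdPath A i m tf := Nat.find_spec hex
    have hmle : m ≤ n - 1 := Nat.find_le hfull
    have hm1 : 1 ≤ m := by
      rcases Nat.eq_zero_or_pos m with h0 | h
      · exact absurd ⟨fun _ => 0, fwdPath_zero⟩ (h0 ▸ hms)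
      · exact h
    set f := m - 1 with hf
    have hPf : ∃ tf : ℕ → ℕ, FwdPath A i f tf := by
      by_contra hc
      have hle' : m ≤ f := Nat.find_le hc
      omega
    have hfle : f ≤ n - 2 := by omega
    -- use connectivity to v = i + (f+1)
    obtain ⟨d, tl, htl, hcase⟩ := extract hn hcyc (hconn i (i + ((f + 1 : ℕ) : ZMod n)))
    rcases hcase with ⟨hw, hp⟩ | ⟨hw, hp⟩
    · -- forward path of length d ≡ f+1 (mod n): contradiction with minimality
      exfalso
      have hdc : ((f + 1 : ℕ) : ZMod n) = ((d : ℕ) : ZMod n) := by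
        have := hw
        rwa [add_right_inj] at this
      have hmod : (f + 1) % n = d % n := (ZMod.natCast_eq_natCast_iff _ _ _).mp hdc
      have hlt : (f + 1) % n = f + 1 := Nat.mod_eq_of_lt (by omega)
      have hdge : f + 1 ≤ d := by
        have := Nat.mod_le d n
        omega
      exact hms ⟨tl, by rw [hm, ← hf] at *; exact fwdPath_trunc hp (by omega)⟩
    · -- backward path of length d ≡ n - f - 1 (mod n)
      have hdc : ((f + 1 + d : ℕ) : ZMod n) = ((0 : ℕ) : ZMod n) := by
        have h1 : ((f + 1 : ℕ) : ZMod n) + (d : ZMod n) = 0 := by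
          have := hw
          rw [sub_eq_add_neg] at this
          have h2 : ((f + 1 : ℕ) : ZMod n) = -(d : ZMod n) := by
            rwa [add_right_inj] at this
          rw [h2]; ring
        push_cast
        push_cast at h1
        linear_combination h1
      have hdvd : n ∣ f + 1 + d := by
        have := (ZMod.natCast_eq_natCast_iff _ _ _).mp hdc
        simpa [Nat.ModEq, Nat.mod_eq_of_lt (by omega : f + 1 + 0 < n), Nat.eq_zero_of_dvd_of_lt] using
          (Nat.modEq_zero_iff_dvd.mp this)
      have hdge : n - f - 1 ≤ d := by
        have hpos : n ≤ f + 1 + d := Nat.le_of_dvd (by omega) hdvd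
        omega
      refine ⟨f, by omega, by omega, hPf, fun k => tl k, ?_⟩
      have harith : 0 + n - f - 1 = n - f - 1 := by omega
      rw [harith]
      have hi0 : i + ((0 : ℕ) : ZMod n) = i := by simp
      rw [hi0]
      exact bwdPath_trunc hp hdge


end AuxSectorProof

/-- Let `𝒢` be a temporal graph whose underlying graph is the cycle
`v_0, …, v_{n-1}, v_0` (temporal edge set `A` supported on cycle edges) and let `A' ⊆ A` be
a temporally connected spanning subgraph.  Then the vertex set can be partitioned into
sectors with respect to `A'`: there are `s ≥ 1` contiguous arcs, the `q`-th starting at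
`i₀ + L 0 + ⋯ + L (q-1)` and consisting of `L q ≥ 1` consecutive vertices, with
`L 0 + ⋯ + L (s-1) = n`, each of which is a sector with respect to `A'`. -/
theorem stmt_11 (n : ℕ) (hn : 3 ≤ n)
    (A : Set (Sym2 (ZMod n) × ℕ))
    (hcyc : ∀ q ∈ A, ∃ i : ZMod n, q.1 = s(i, i + 1))
    (A' : Set (Sym2 (ZMod n) × ℕ)) (hsub : A' ⊆ A)
    (hconn : TConnected A') :
    ∃ (s : ℕ), 0 < s ∧
      ∃ (L : Fin s → ℕ) (i₀ : ZMod n),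
        (∀ q, 1 ≤ L q) ∧ (∑ q, L q) = n ∧
        ∀ q : Fin s,
          Sector A'
            (i₀ + ((∑ q' ∈ Finset.univ.filter (fun x => x < q), L q' : ℕ) : ZMod n))
            (L q - 1) := by

  haveI : NeZero n := ⟨by omega⟩
  have hcyc' : ∀ q ∈ A', ∃ i : ZMod n, q.1 = s(i, i + 1) := fun q hq => hcyc q (hsub hq)
  refine ⟨n, by omega, fun _ => 1, 0, fun _ => le_refl 1, by simp, ?_⟩
  intro q
  have hsum : (∑ q' ∈ Finset.univ.filter (fun x => x < q), (1 : ℕ)) =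
      (Finset.univ.filter (fun x => x < q)).card := by
    simp
  have hsec := singleton_sector hn hcyc' hconn
    (0 + ((∑ q' ∈ Finset.univ.filter (fun x => x < q), (1 : ℕ) : ℕ) : ZMod n))
  simpa using hsec
end

section
/- Let G(V,E) be a connected bipartite graph with parts S = {u_1, …, u_m} (terminals, m ≥ 2) and T = V∖S (non-terminals, T nonempty), so every edge of G joins a vertex of S to a vertex of T, with unit weight on every edge. Construct the unit-weight temporal graph 𝒢 as follows: every edge of G gets the single time label 3; add new vertices p, q, x and a_1, …, a_m, b_1, …, b_m; for every t ∈ T add edges {t,p} with label 4 and {t,q} with label 2; for every i ∈ [m] add edges {p,a_i} with label 1, {a_i,u_i} with label 5, {u_i,b_i} with label 1, and {b_i,q} with label 5; add edges {p,x} with label 1 and {x,q} with label 5. Let k = 2|T| + 4m + 2 be the number of added temporal edges. Then the minimum number of temporal edges in a temporally connected spanning subgraph of 𝒢 equals k + OPT, where OPT is the minimum number of edges of a connected subgraph of G that spans all vertices of S. -/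
/-- The vertices of the temporal graph built in the reduction from unit-weight Steiner Tree:
the terminals `u i` (`i ∈ Fin m`), the non-terminals `t y` (`y : τ`), the special vertices
`p`, `q`, `x`, and the new vertices `a i`, `b i` (`i ∈ Fin m`). -/
inductive RV (m : ℕ) (τ : Type*) where
  | u : Fin m → RV m τ
  | t : τ → RV m τ
  | p : RV m τ
  | q : RV m τ
  | x : RV m τ
  | a : Fin m → RV m τ
  | b : Fin m → RV m τ
  deriving DecidableEq

/-- The temporal edges coming from the edges of the bipartite graph `G` (edge set `E₀`),
each with time label `3`. -/
def gEdges {m : ℕ} {τ : Type*} [DecidableEq τ] (E₀ : Finset (Fin m × τ)) :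
    Finset (Sym2 (RV m τ) × ℕ) :=
  E₀.image (fun e => (s(RV.u e.1, RV.t e.2), 3))

/-- The `k = 2|T| + 4m + 2` auxiliary temporal edges added in the reduction: for each
non-terminal `t`, edges `{t,p}` with label `4` and `{t,q}` with label `2`; for each
`i ∈ Fin m`, edges `{p,a i}` with label `1`, `{a i, u i}` with label `5`, `{u i, b i}` with
label `1`, `{b i, q}` with label `5`; and edges `{p,x}` with label `1`, `{x,q}` with
label `5`. -/
def auxEdges (m : ℕ) (τ : Type*) [DecidableEq τ] [Fintype τ] :
    Finset (Sym2 (RV m τ) × ℕ) :=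
  (Finset.univ : Finset τ).image (fun y => (s(RV.t y, RV.p), 4)) ∪
  (Finset.univ : Finset τ).image (fun y => (s(RV.t y, RV.q), 2)) ∪
  (Finset.univ : Finset (Fin m)).image (fun i => (s(RV.p, RV.a i), 1)) ∪
  (Finset.univ : Finset (Fin m)).image (fun i => (s(RV.a i, RV.u i), 5)) ∪
  (Finset.univ : Finset (Fin m)).image (fun i => (s(RV.u i, RV.b i), 1)) ∪
  (Finset.univ : Finset (Fin m)).image (fun i => (s(RV.b i, RV.q), 5)) ∪
  {(s(RV.p, RV.x), 1), (s(RV.x, RV.q), 5)}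

/-- The full set of temporal edges of the temporal graph `𝒢` of the reduction. -/
def tempEdges {m : ℕ} {τ : Type*} [DecidableEq τ] [Fintype τ]
    (E : Finset (Fin m × τ)) : Finset (Sym2 (RV m τ) × ℕ) :=
  gEdges E ∪ auxEdges m τ

/-- The (bipartite, unit-weight) graph on `Fin m ⊕ τ` determined by an edge set
`E₀ ⊆ Fin m × τ`. -/
def SteinerGraph {m : ℕ} {τ : Type*} (E₀ : Finset (Fin m × τ)) :
    SimpleGraph (Fin m ⊕ τ) :=
  SimpleGraph.fromEdgeSet {e | ∃ ed ∈ E₀, e = s(Sum.inl ed.1, Sum.inr ed.2)}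

/-- The vertices of the subgraph determined by `E₀`: all terminals, together with the
non-terminal endpoints of edges of `E₀`. -/
def InSub {m : ℕ} {τ : Type*} (E₀ : Finset (Fin m × τ)) (v : Fin m ⊕ τ) : Prop :=
  (∃ i : Fin m, v = Sum.inl i) ∨ (∃ ed ∈ E₀, v = Sum.inr ed.2)

/-- `E₀ ⊆ E` is a feasible Steiner solution: the subgraph of `G` with edge set `E₀`,
together with all terminals, is connected (hence it is a connected subgraph of `G`
containing every vertex of `S`). -/
def SteinerFeasible {m : ℕ} {τ : Type*} (E E₀ : Finset (Fin m × τ)) : Prop :=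
  E₀ ⊆ E ∧
  ∀ v w : Fin m ⊕ τ, InSub E₀ v → InSub E₀ w → (SteinerGraph E₀).Reachable v w

section
variable {V : Type*} {A : Set (Sym2 V × ℕ)}

theorem TReach.mono {u v : V} {t s : ℕ} (h : TReach A u t v) (hs : s ≤ t) :
    TReach A u s v := by
  induction h with
  | refl u t => exact TReach.refl u s
  | step hmem hle htail ih => exact TReach.step hmem (hs.trans hle) htail

theorem TReach.stepSwap {u v w : V} {t t' : ℕ} (h : (s(v, u), t') ∈ A) (hle : t ≤ t')
    (htail : TReach A v t' w) : TReach A u t w :=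
  TReach.step (Sym2.eq_swap ▸ h) hle htail

theorem noReach (J : V → ℕ → Prop)
    (hcl : ∀ u v t t', J u t → (s(u,v),t') ∈ A → t ≤ t' → J v t')
    {u : V} {t : ℕ} {w : V} (h : TReach A u t w) (hJ : J u t) (hw : ∀ t', ¬ J w t') :
    False := by
  induction h with
  | refl u t => exact hw t hJ
  | step hmem hle htail ih => exact ih (hcl _ _ _ _ hJ hmem hle) hw

theorem reachInv (J : V → ℕ → Prop)
    (hcl : ∀ u v t t', J u t → (s(u,v),t') ∈ A → t ≤ t' → J v t')
    {u : V} {t : ℕ} {w : V} (h : TReach A u t w) (hJ : J u t) : ∃ t', J w t' := by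
  induction h with
  | refl u t => exact ⟨t, hJ⟩
  | step hmem hle htail ih => exact ih (hcl _ _ _ _ hJ hmem hle)

end

section
variable {m : ℕ} {τ : Type*} [DecidableEq τ] [Fintype τ]

lemma edge_cases {E : Finset (Fin m × τ)} {e : Sym2 (RV m τ) × ℕ} (h : e ∈ tempEdges E) :
    (∃ ed ∈ E, e = (s(RV.u ed.1, RV.t ed.2), 3)) ∨
    (∃ y : τ, e = (s(RV.t y, RV.p), 4)) ∨ (∃ y : τ, e = (s(RV.t y, RV.q), 2)) ∨
    (∃ i : Fin m, e = (s(RV.p, RV.a i), 1)) ∨ (∃ i : Fin m, e = (s(RV.a i, RV.u i), 5)) ∨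
    (∃ i : Fin m, e = (s(RV.u i, RV.b i), 1)) ∨ (∃ i : Fin m, e = (s(RV.b i, RV.q), 5)) ∨
    e = (s(RV.p, RV.x), 1) ∨ e = (s(RV.x, RV.q), 5) := by
  simp only [tempEdges, gEdges, auxEdges, Finset.mem_union, Finset.mem_image,
    Finset.mem_insert, Finset.mem_singleton, Finset.mem_univ, true_and, eq_comm] at h
  rcases h with ⟨ed, hed, he⟩ | ((((((⟨y, hy⟩ | ⟨y, hy⟩) | ⟨i, hi⟩) | ⟨i, hi⟩) | ⟨i, hi⟩) | ⟨i, hi⟩) | (h | h))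
  · exact .inl ⟨ed, hed, he⟩
  · exact .inr (.inl ⟨y, hy⟩)
  · exact .inr (.inr (.inl ⟨y, hy⟩))
  · exact .inr (.inr (.inr (.inl ⟨i, hi⟩)))
  · exact .inr (.inr (.inr (.inr (.inl ⟨i, hi⟩))))
  · exact .inr (.inr (.inr (.inr (.inr (.inl ⟨i, hi⟩)))))
  · exact .inr (.inr (.inr (.inr (.inr (.inr (.inl ⟨i, hi⟩))))))
  · exact .inr (.inr (.inr (.inr (.inr (.inr (.inr (.inl h)))))))
  · exact .inr (.inr (.inr (.inr (.inr (.inr (.inr (.inr h)))))))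

end
section
variable {m : ℕ} {τ : Type*} [DecidableEq τ] [Fintype τ]
variable {E : Finset (Fin m × τ)} {B : Finset (Sym2 (RV m τ) × ℕ)}

lemma nec_pa (hB : B ⊆ tempEdges E) (i : Fin m)
    (h : TReach (↑B : Set (Sym2 (RV m τ) × ℕ)) RV.x 0 (RV.a i)) :
    (s(RV.p, RV.a i), 1) ∈ B := by
  by_contra hne
  refine noReach (A := (↑B : Set (Sym2 (RV m τ) × ℕ)))
    (fun v t => match v with
      | RV.x => True
      | RV.p => True
      | RV.t _ => 4 ≤ t
      | RV.q => 5 ≤ t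
      | RV.b _ => 5 ≤ t
      | RV.a j => (s(RV.p, RV.a j), 1) ∈ B ∧ 1 ≤ t
      | RV.u j => (s(RV.p, RV.a j), 1) ∈ B ∧ 5 ≤ t) ?_ h trivial ?_
  · intro u' v' t t' hJ hmem hle
    rcases edge_cases (hB (Finset.mem_coe.mp hmem)) with
      ⟨ed, hed, he⟩ | ⟨y, he⟩ | ⟨y, he⟩ | ⟨j, he⟩ | ⟨j, he⟩ | ⟨j, he⟩ | ⟨j, he⟩ | he | he <;>
      rw [Prod.mk.injEq, Sym2.eq_iff] at he <;>
      rcases he with ⟨⟨rfl, rfl⟩ | ⟨rfl, rfl⟩, rfl⟩ <;>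
      simp_all <;> omega
  · intro t' hJ
    exact hne hJ.1
end
section
variable {m : ℕ} {τ : Type*} [DecidableEq τ] [Fintype τ]
variable {E : Finset (Fin m × τ)} {B : Finset (Sym2 (RV m τ) × ℕ)}

lemma nec_au (hB : B ⊆ tempEdges E) (i : Fin m)
    (h : TReach (↑B : Set (Sym2 (RV m τ) × ℕ)) RV.x 0 (RV.u i)) :
    (s(RV.a i, RV.u i), 5) ∈ B := by
  by_contra hne
  refine noReach (A := (↑B : Set (Sym2 (RV m τ) × ℕ)))
    (fun v t => match v with
      | RV.x => True
      | RV.p => True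
      | RV.t _ => 4 ≤ t
      | RV.q => 5 ≤ t
      | RV.b _ => 5 ≤ t
      | RV.a _ => 1 ≤ t
      | RV.u j => (s(RV.a j, RV.u j), 5) ∈ B ∧ 5 ≤ t) ?_ h trivial ?_
  · intro u' v' t t' hJ hmem hle
    rcases edge_cases (hB (Finset.mem_coe.mp hmem)) with
      ⟨ed, hed, he⟩ | ⟨y, he⟩ | ⟨y, he⟩ | ⟨j, he⟩ | ⟨j, he⟩ | ⟨j, he⟩ | ⟨j, he⟩ | he | he <;>
      rw [Prod.mk.injEq, Sym2.eq_iff] at he <;>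
      rcases he with ⟨⟨rfl, rfl⟩ | ⟨rfl, rfl⟩, rfl⟩ <;>
      simp_all <;> omega
  · intro t' hJ
    exact hne hJ.1

lemma nec_ub (hB : B ⊆ tempEdges E) (i : Fin m)
    (h : TReach (↑B : Set (Sym2 (RV m τ) × ℕ)) (RV.u i) 0 RV.q) :
    (s(RV.u i, RV.b i), 1) ∈ B := by
  by_contra hne
  refine noReach (A := (↑B : Set (Sym2 (RV m τ) × ℕ)))
    (fun v t => match v with
      | RV.x => False
      | RV.p => 4 ≤ t
      | RV.t _ => 3 ≤ t
      | RV.q => False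
      | RV.b _ => False
      | RV.a _ => 5 ≤ t
      | RV.u j => j = i ∨ 3 ≤ t) ?_ h (Or.inl rfl) ?_
  · intro u' v' t t' hJ hmem hle
    rcases edge_cases (hB (Finset.mem_coe.mp hmem)) with
      ⟨ed, hed, he⟩ | ⟨y, he⟩ | ⟨y, he⟩ | ⟨j, he⟩ | ⟨j, he⟩ | ⟨j, he⟩ | ⟨j, he⟩ | he | he <;>
      rw [Prod.mk.injEq, Sym2.eq_iff] at he <;>
      rcases he with ⟨⟨rfl, rfl⟩ | ⟨rfl, rfl⟩, rfl⟩ <;>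
      simp_all <;> (try omega)
    rcases hJ with rfl | h5
    · exact hne (by exact_mod_cast hmem)
    · omega
  · intro t' hJ
    exact hJ

lemma nec_bq (hB : B ⊆ tempEdges E) (i : Fin m)
    (h : TReach (↑B : Set (Sym2 (RV m τ) × ℕ)) (RV.u i) 0 RV.q) :
    (s(RV.b i, RV.q), 5) ∈ B := by
  by_contra hne
  refine noReach (A := (↑B : Set (Sym2 (RV m τ) × ℕ)))
    (fun v t => match v with
      | RV.x => False
      | RV.p => 4 ≤ t
      | RV.t _ => 3 ≤ t
      | RV.q => False
      | RV.b j => j = i ∧ 1 ≤ t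
      | RV.a _ => 5 ≤ t
      | RV.u j => j = i ∨ 3 ≤ t) ?_ h (Or.inl rfl) ?_
  · intro u' v' t t' hJ hmem hle
    rcases edge_cases (hB (Finset.mem_coe.mp hmem)) with
      ⟨ed, hed, he⟩ | ⟨y, he⟩ | ⟨y, he⟩ | ⟨j, he⟩ | ⟨j, he⟩ | ⟨j, he⟩ | ⟨j, he⟩ | he | he <;>
      rw [Prod.mk.injEq, Sym2.eq_iff] at he <;>
      rcases he with ⟨⟨rfl, rfl⟩ | ⟨rfl, rfl⟩, rfl⟩ <;>
      simp_all <;> (try omega)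
  · intro t' hJ
    exact hJ

lemma nec_tq (hB : B ⊆ tempEdges E) (y : τ)
    (h : TReach (↑B : Set (Sym2 (RV m τ) × ℕ)) (RV.t y) 0 RV.q) :
    (s(RV.t y, RV.q), 2) ∈ B := by
  by_contra hne
  refine noReach (A := (↑B : Set (Sym2 (RV m τ) × ℕ)))
    (fun v t => match v with
      | RV.x => False
      | RV.p => 4 ≤ t
      | RV.t z => z = y ∨ 3 ≤ t
      | RV.q => False
      | RV.b _ => False
      | RV.a _ => 5 ≤ t
      | RV.u _ => 3 ≤ t) ?_ h (Or.inl rfl) ?_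
  · intro u' v' t t' hJ hmem hle
    rcases edge_cases (hB (Finset.mem_coe.mp hmem)) with
      ⟨ed, hed, he⟩ | ⟨y', he⟩ | ⟨y', he⟩ | ⟨j, he⟩ | ⟨j, he⟩ | ⟨j, he⟩ | ⟨j, he⟩ | he | he <;>
      rw [Prod.mk.injEq, Sym2.eq_iff] at he <;>
      rcases he with ⟨⟨rfl, rfl⟩ | ⟨rfl, rfl⟩, rfl⟩ <;>
      simp_all <;> (try omega)
    rcases hJ with rfl | h5
    · exact hne (by exact_mod_cast hmem)
    · omega
  · intro t' hJ
    exact hJ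

lemma nec_tp (hB : B ⊆ tempEdges E) (y : τ) (i : Fin m)
    (h : TReach (↑B : Set (Sym2 (RV m τ) × ℕ)) (RV.a i) 0 (RV.t y)) :
    (s(RV.t y, RV.p), 4) ∈ B := by
  by_contra hne
  refine noReach (A := (↑B : Set (Sym2 (RV m τ) × ℕ)))
    (fun v t => match v with
      | RV.x => True
      | RV.p => True
      | RV.t z => (s(RV.t z, RV.p), 4) ∈ B ∧ 4 ≤ t
      | RV.q => 5 ≤ t
      | RV.b _ => 5 ≤ t
      | RV.a _ => True
      | RV.u _ => 5 ≤ t) ?_ h trivial ?_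
  · intro u' v' t t' hJ hmem hle
    rcases edge_cases (hB (Finset.mem_coe.mp hmem)) with
      ⟨ed, hed, he⟩ | ⟨y', he⟩ | ⟨y', he⟩ | ⟨j, he⟩ | ⟨j, he⟩ | ⟨j, he⟩ | ⟨j, he⟩ | he | he <;>
      rw [Prod.mk.injEq, Sym2.eq_iff] at he <;>
      rcases he with ⟨⟨rfl, rfl⟩ | ⟨rfl, rfl⟩, rfl⟩ <;>
      simp_all <;> (try omega)
    rw [Sym2.eq_swap]
    exact_mod_cast hmem
  · intro t' hJ
    exact hne hJ.1

lemma nec_px (hB : B ⊆ tempEdges E)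
    (h : TReach (↑B : Set (Sym2 (RV m τ) × ℕ)) RV.p 0 RV.x) :
    (s(RV.p, RV.x), 1) ∈ B := by
  by_contra hne
  refine noReach (A := (↑B : Set (Sym2 (RV m τ) × ℕ)))
    (fun v t => match v with
      | RV.x => False
      | RV.p => True
      | RV.t _ => 4 ≤ t
      | RV.q => False
      | RV.b _ => False
      | RV.a _ => True
      | RV.u _ => 5 ≤ t) ?_ h trivial ?_
  · intro u' v' t t' hJ hmem hle
    rcases edge_cases (hB (Finset.mem_coe.mp hmem)) with
      ⟨ed, hed, he⟩ | ⟨y', he⟩ | ⟨y', he⟩ | ⟨j, he⟩ | ⟨j, he⟩ | ⟨j, he⟩ | ⟨j, he⟩ | he | he <;>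
      rw [Prod.mk.injEq, Sym2.eq_iff] at he <;>
      rcases he with ⟨⟨rfl, rfl⟩ | ⟨rfl, rfl⟩, rfl⟩ <;>
      simp_all <;> (try omega)
  · intro t' hJ
    exact hJ

lemma nec_xq (hB : B ⊆ tempEdges E)
    (h : TReach (↑B : Set (Sym2 (RV m τ) × ℕ)) RV.x 0 RV.q) :
    (s(RV.x, RV.q), 5) ∈ B := by
  by_contra hne
  refine noReach (A := (↑B : Set (Sym2 (RV m τ) × ℕ)))
    (fun v t => match v with
      | RV.x => True
      | RV.p => True
      | RV.t _ => 4 ≤ t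
      | RV.q => False
      | RV.b _ => False
      | RV.a _ => True
      | RV.u _ => 5 ≤ t) ?_ h trivial ?_
  · intro u' v' t t' hJ hmem hle
    rcases edge_cases (hB (Finset.mem_coe.mp hmem)) with
      ⟨ed, hed, he⟩ | ⟨y', he⟩ | ⟨y', he⟩ | ⟨j, he⟩ | ⟨j, he⟩ | ⟨j, he⟩ | ⟨j, he⟩ | he | he <;>
      rw [Prod.mk.injEq, Sym2.eq_iff] at he <;>
      rcases he with ⟨⟨rfl, rfl⟩ | ⟨rfl, rfl⟩, rfl⟩ <;>
      simp_all <;> (try omega)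
  · intro t' hJ
    exact hJ
end
section
variable {m : ℕ} {τ : Type*} [DecidableEq τ] [Fintype τ]
variable {E : Finset (Fin m × τ)} {B : Finset (Sym2 (RV m τ) × ℕ)}

lemma steiner_adj {E₀ : Finset (Fin m × τ)} {ed : Fin m × τ} (hed : ed ∈ E₀) :
    (SteinerGraph E₀).Adj (Sum.inl ed.1) (Sum.inr ed.2) := by
  rw [SteinerGraph, SimpleGraph.fromEdgeSet_adj]
  exact ⟨⟨ed, hed, rfl⟩, by simp⟩

lemma extract_s14 (hB : B ⊆ tempEdges E) (i j : Fin m)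
    (h : TReach (↑B : Set (Sym2 (RV m τ) × ℕ)) (RV.u i) 0 (RV.u j)) :
    (SteinerGraph (E.filter fun ed => (s(RV.u ed.1, RV.t ed.2), 3) ∈ B)).Reachable
      (Sum.inl i) (Sum.inl j) := by
  set E₀ := E.filter fun ed => (s(RV.u ed.1, RV.t ed.2), 3) ∈ B with hE₀
  set R : Fin m ⊕ τ → Prop := fun z => (SteinerGraph E₀).Reachable (Sum.inl i) z with hR
  have key := reachInv (A := (↑B : Set (Sym2 (RV m τ) × ℕ)))
    (fun v t => match v with
      | RV.u l => R (Sum.inl l)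
      | RV.t y => (R (Sum.inr y) ∧ 3 ≤ t) ∨ 4 ≤ t
      | RV.p => 4 ≤ t
      | RV.a l => R (Sum.inl l) ∧ 5 ≤ t
      | RV.b l => (R (Sum.inl l) ∧ 1 ≤ t) ∨ 5 ≤ t
      | RV.q => 5 ≤ t
      | RV.x => 5 ≤ t) ?_ h ?_
  · obtain ⟨t', ht'⟩ := key
    exact ht'
  · intro u' v' t t' hJ hmem hle
    have hmemB : (s(u', v'), t') ∈ B := by exact_mod_cast hmem
    rcases edge_cases (hB hmemB) with
      ⟨ed, hed, he⟩ | ⟨y, he⟩ | ⟨y, he⟩ | ⟨l, he⟩ | ⟨l, he⟩ | ⟨l, he⟩ | ⟨l, he⟩ | he | he <;>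
      rw [Prod.mk.injEq, Sym2.eq_iff] at he <;>
      rcases he with ⟨⟨rfl, rfl⟩ | ⟨rfl, rfl⟩, rfl⟩
    · -- u ed.1 → t ed.2, label 3
      have hadj : (SteinerGraph E₀).Adj (Sum.inl ed.1) (Sum.inr ed.2) :=
        steiner_adj (Finset.mem_filter.mpr ⟨hed, hmemB⟩)
      exact Or.inl ⟨hJ.trans hadj.reachable, le_refl 3⟩
    · -- t ed.2 → u ed.1
      have hmemB' : (s(RV.u ed.1, RV.t ed.2), 3) ∈ B := by rwa [Sym2.eq_swap] at hmemB
      rcases hJ with ⟨hr, -⟩ | h4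
      · have hadj : (SteinerGraph E₀).Adj (Sum.inl ed.1) (Sum.inr ed.2) :=
          steiner_adj (Finset.mem_filter.mpr ⟨hed, hmemB'⟩)
        exact hr.trans hadj.symm.reachable
      · exact absurd hle (by omega)
    all_goals simp_all
    all_goals
      first
        | omega
        | (rcases hJ with ⟨hr, h5⟩ | h5
           · first | exact hr | exact absurd hle (by omega)
           · exact absurd hle (by omega))
  · exact SimpleGraph.Reachable.refl _
end
section
variable {m : ℕ} {τ : Type*} [DecidableEq τ] [Fintype τ]

lemma deg_lemma (hm : 2 ≤ m) {E₀ : Finset (Fin m × τ)}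
    (hconn : ∀ v w : Fin m ⊕ τ, InSub E₀ v → InSub E₀ w → (SteinerGraph E₀).Reachable v w)
    (i : Fin m) : ∃ y : τ, (i, y) ∈ E₀ := by
  by_contra hno
  push_neg at hno
  have hiso : ∀ v, ¬ (SteinerGraph E₀).Adj (Sum.inl i) v := by
    intro v hadj
    rw [SteinerGraph, SimpleGraph.fromEdgeSet_adj] at hadj
    obtain ⟨⟨ed, hed, he⟩, -⟩ := hadj
    rw [Sym2.eq_iff] at he
    rcases he with ⟨h1, h2⟩ | ⟨h1, h2⟩
    · obtain ⟨rfl⟩ := Sum.inl.inj h1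
      exact hno ed.2 hed
    · exact Sum.inl_ne_inr h1
  have hex : ∃ i' : Fin m, i ≠ i' := by
    rcases Nat.eq_zero_or_pos i.val with h0 | h0
    · exact ⟨⟨1, by omega⟩, by intro hh; rw [Fin.ext_iff] at hh; simp at hh; omega⟩
    · exact ⟨⟨0, by omega⟩, by intro hh; rw [Fin.ext_iff] at hh; simp at hh; omega⟩
  obtain ⟨i', hne⟩ := hex
  obtain ⟨w⟩ := hconn (Sum.inl i) (Sum.inl i') (Or.inl ⟨i, rfl⟩) (Or.inl ⟨i', rfl⟩)
  cases w with
  | nil => exact hne (by simpa using rfl)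
  | cons adj _ => exact hiso _ adj
end
section
variable {m : ℕ} {τ : Type*} [DecidableEq τ] [Fintype τ]

lemma mem_aux_tp (y : τ) : (s(RV.t y, RV.p), 4) ∈ auxEdges m τ := by
  simp [auxEdges]
lemma mem_aux_tq (y : τ) : (s(RV.t y, RV.q), 2) ∈ auxEdges m τ := by
  simp [auxEdges]
lemma mem_aux_pa (i : Fin m) : (s(RV.p, RV.a i), 1) ∈ auxEdges m τ := by
  simp [auxEdges]
lemma mem_aux_au (i : Fin m) : (s(RV.a i, RV.u i), 5) ∈ auxEdges m τ := by
  simp [auxEdges]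
lemma mem_aux_ub (i : Fin m) : (s(RV.u i, RV.b i), 1) ∈ auxEdges m τ := by
  simp [auxEdges]
lemma mem_aux_bq (i : Fin m) : (s(RV.b i, RV.q), 5) ∈ auxEdges m τ := by
  simp [auxEdges]
lemma mem_aux_px : (s(RV.p, RV.x), 1) ∈ auxEdges m τ := by
  simp [auxEdges]
lemma mem_aux_xq : (s(RV.x, RV.q), 5) ∈ auxEdges m τ := by
  simp [auxEdges]
end
section
variable {V : Type*} {A : Set (Sym2 V × ℕ)}
theorem tstep {u v w : V} {t t' : ℕ} (h : (s(u, v), t') ∈ A)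
    (htail : TReach A v t' w) (hle : t ≤ t') : TReach A u t w :=
  TReach.step h hle htail
theorem tstepS {u v w : V} {t t' : ℕ} (h : (s(v, u), t') ∈ A)
    (htail : TReach A v t' w) (hle : t ≤ t') : TReach A u t w :=
  TReach.stepSwap h hle htail
end
section
variable {m : ℕ} {τ : Type*} [DecidableEq τ] [Fintype τ]

lemma reach3 {A : Set (Sym2 (RV m τ) × ℕ)} {E₀ : Finset (Fin m × τ)}
    (hg : ∀ ed ∈ E₀, (s(RV.u ed.1, RV.t ed.2), 3) ∈ A)
    {v w : Fin m ⊕ τ} (h : (SteinerGraph E₀).Reachable v w) {z : RV m τ}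
    (htail : TReach A (Sum.elim RV.u RV.t w) 3 z) :
    TReach A (Sum.elim RV.u RV.t v) 3 z := by
  obtain ⟨wk⟩ := h
  induction wk with
  | nil => exact htail
  | cons adj pth ih =>
    have htail' := ih htail
    rw [SteinerGraph, SimpleGraph.fromEdgeSet_adj] at adj
    obtain ⟨⟨ed, hed, he⟩, -⟩ := adj
    rw [Sym2.eq_iff] at he
    rcases he with ⟨rfl, rfl⟩ | ⟨rfl, rfl⟩
    · exact tstep (hg ed hed) htail' (le_refl 3)
    · exact tstepS (hg ed hed) htail' (le_refl 3)

lemma upper_tconn [Nonempty τ] (hm : 2 ≤ m) {E₀ : Finset (Fin m × τ)}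
    (hconn : ∀ v w : Fin m ⊕ τ, InSub E₀ v → InSub E₀ w → (SteinerGraph E₀).Reachable v w) :
    TConnected (↑(gEdges E₀ ∪ auxEdges m τ) : Set (Sym2 (RV m τ) × ℕ)) := by
  set A : Set (Sym2 (RV m τ) × ℕ) := ↑(gEdges E₀ ∪ auxEdges m τ) with hA0
  have hA : ∀ e ∈ auxEdges m τ, e ∈ A :=
    fun e he => Finset.mem_coe.mpr (Finset.mem_union_right _ he)
  have hgB : ∀ ed ∈ E₀, (s(RV.u ed.1, RV.t ed.2), 3) ∈ A :=
    fun ed hed => Finset.mem_coe.mpr (Finset.mem_union_left _ (Finset.mem_image_of_mem _ hed))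
  have hdeg := deg_lemma hm hconn
  have fromP : ∀ z, TReach A RV.p 1 z := by
    intro z
    cases z with
    | p => exact .refl _ _
    | a j => exact tstep (hA _ (mem_aux_pa j)) (.refl _ 1) (by omega)
    | x => exact tstep (hA _ mem_aux_px) (.refl _ 1) (by omega)
    | u j =>
      exact tstep (hA _ (mem_aux_pa j)) (tstep (hA _ (mem_aux_au j)) (.refl _ 5) (by omega))
        (by omega)
    | t y => exact tstepS (hA _ (mem_aux_tp y)) (.refl _ 4) (by omega)
    | q =>
      exact tstep (hA _ mem_aux_px) (tstep (hA _ mem_aux_xq) (.refl _ 5) (by omega)) (by omega)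
    | b j =>
      exact tstep (hA _ mem_aux_px)
        (tstep (hA _ mem_aux_xq) (tstepS (hA _ (mem_aux_bq j)) (.refl _ 5) (by omega)) (by omega))
        (by omega)
  have fromU : ∀ (i : Fin m) z, TReach A (RV.u i) 1 z := by
    intro i z
    obtain ⟨y', hy'⟩ := hdeg i
    cases z with
    | u j => exact (reach3 hgB (hconn _ _ (Or.inl ⟨i, rfl⟩) (Or.inl ⟨j, rfl⟩))
        (TReach.refl (Sum.elim RV.u RV.t (Sum.inl j)) 3)).mono (by omega)
    | a j => exact (reach3 hgB (hconn _ _ (Or.inl ⟨i, rfl⟩) (Or.inl ⟨j, rfl⟩))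
        (tstepS (hA _ (mem_aux_au j)) (.refl _ 5) (by omega))).mono (by omega)
    | t y =>
      exact tstep (hgB (i, y') hy')
        (tstep (hA _ (mem_aux_tp y')) (tstepS (hA _ (mem_aux_tp y)) (.refl _ 4) (by omega))
          (by omega))
        (by omega)
    | p =>
      exact tstep (hgB (i, y') hy') (tstep (hA _ (mem_aux_tp y')) (.refl _ 4) (by omega))
        (by omega)
    | q =>
      exact tstep (hA _ (mem_aux_ub i)) (tstep (hA _ (mem_aux_bq i)) (.refl _ 5) (by omega))
        (by omega)
    | b j =>
      exact tstep (hA _ (mem_aux_ub i))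
        (tstep (hA _ (mem_aux_bq i)) (tstepS (hA _ (mem_aux_bq j)) (.refl _ 5) (by omega))
          (by omega))
        (by omega)
    | x =>
      exact tstep (hA _ (mem_aux_ub i))
        (tstep (hA _ (mem_aux_bq i)) (tstepS (hA _ mem_aux_xq) (.refl _ 5) (by omega))
          (by omega))
        (by omega)
  have fromQ : ∀ z, TReach A RV.q 2 z := by
    intro z
    cases z with
    | q => exact .refl _ _
    | t y => exact tstepS (hA _ (mem_aux_tq y)) (.refl _ 2) (by omega)
    | p =>
      obtain ⟨y₀⟩ := (inferInstance : Nonempty τ)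
      exact tstepS (hA _ (mem_aux_tq y₀)) (tstep (hA _ (mem_aux_tp y₀)) (.refl _ 4) (by omega))
        (by omega)
    | u j =>
      obtain ⟨y', hy'⟩ := hdeg j
      exact tstepS (hA _ (mem_aux_tq y')) (tstepS (hgB (j, y') hy') (.refl _ 3) (by omega))
        (by omega)
    | a j =>
      obtain ⟨y', hy'⟩ := hdeg j
      exact tstepS (hA _ (mem_aux_tq y'))
        (tstepS (hgB (j, y') hy') (tstepS (hA _ (mem_aux_au j)) (.refl _ 5) (by omega))
          (by omega))
        (by omega)
    | b j => exact tstepS (hA _ (mem_aux_bq j)) (.refl _ 5) (by omega)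
    | x => exact tstepS (hA _ mem_aux_xq) (.refl _ 5) (by omega)
  intro v w
  cases v with
  | p => exact (fromP w).mono (by omega)
  | u i => exact (fromU i w).mono (by omega)
  | q => exact (fromQ w).mono (by omega)
  | t y => exact tstep (hA _ (mem_aux_tq y)) (fromQ w) (by omega)
  | x => exact tstepS (hA _ mem_aux_px) (fromP w) (by omega)
  | a i => exact tstepS (hA _ (mem_aux_pa i)) (fromP w) (by omega)
  | b i => exact tstepS (hA _ (mem_aux_ub i)) (fromU i w) (by omega)
end
section
variable {m : ℕ} {τ : Type*} [DecidableEq τ] [Fintype τ]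

lemma card_aux : (auxEdges m τ).card = 2 * Fintype.card τ + 4 * m + 2 := by
  have d1 : Disjoint
      ((Finset.univ : Finset τ).image (fun y => (s(RV.t y, RV.p), 4)) ∪
       (Finset.univ : Finset τ).image (fun y => (s(RV.t y, RV.q), 2)) ∪
       (Finset.univ : Finset (Fin m)).image (fun i => (s(RV.p, RV.a i), 1)) ∪
       (Finset.univ : Finset (Fin m)).image (fun i => (s(RV.a i, RV.u i), 5)) ∪
       (Finset.univ : Finset (Fin m)).image (fun i => (s(RV.u i, RV.b i), 1)) ∪
       (Finset.univ : Finset (Fin m)).image (fun i => (s(RV.b i, RV.q), 5)))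
      ({(s(RV.p, RV.x), 1), (s(RV.x, RV.q), 5)} : Finset (Sym2 (RV m τ) × ℕ)) := by
    rw [Finset.disjoint_right]
    intro e he
    simp only [Finset.mem_insert, Finset.mem_singleton] at he
    rcases he with rfl | rfl <;>
      simp [Prod.mk.injEq, Sym2.eq_iff]
  have d2 : Disjoint
      ((Finset.univ : Finset τ).image (fun y => (s(RV.t y, RV.p), 4)) ∪
       (Finset.univ : Finset τ).image (fun y => (s(RV.t y, RV.q), 2)) ∪
       (Finset.univ : Finset (Fin m)).image (fun i => (s(RV.p, RV.a i), 1)) ∪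
       (Finset.univ : Finset (Fin m)).image (fun i => (s(RV.a i, RV.u i), 5)) ∪
       (Finset.univ : Finset (Fin m)).image (fun i => (s(RV.u i, RV.b i), 1)))
      ((Finset.univ : Finset (Fin m)).image (fun i => (s(RV.b i, RV.q), 5))) := by
    rw [Finset.disjoint_right]
    intro e he
    simp only [Finset.mem_image, Finset.mem_univ, true_and] at he
    obtain ⟨x, rfl⟩ := he
    simp [Prod.mk.injEq, Sym2.eq_iff]
  have d3 : Disjoint
      ((Finset.univ : Finset τ).image (fun y => (s(RV.t y, RV.p), 4)) ∪
       (Finset.univ : Finset τ).image (fun y => (s(RV.t y, RV.q), 2)) ∪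
       (Finset.univ : Finset (Fin m)).image (fun i => (s(RV.p, RV.a i), 1)) ∪
       (Finset.univ : Finset (Fin m)).image (fun i => (s(RV.a i, RV.u i), 5)))
      ((Finset.univ : Finset (Fin m)).image (fun i => (s(RV.u i, RV.b i), 1))) := by
    rw [Finset.disjoint_right]
    intro e he
    simp only [Finset.mem_image, Finset.mem_univ, true_and] at he
    obtain ⟨x, rfl⟩ := he
    simp [Prod.mk.injEq, Sym2.eq_iff]
  have d4 : Disjoint
      ((Finset.univ : Finset τ).image (fun y => (s(RV.t y, RV.p), 4)) ∪
       (Finset.univ : Finset τ).image (fun y => (s(RV.t y, RV.q), 2)) ∪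
       (Finset.univ : Finset (Fin m)).image (fun i => (s(RV.p, RV.a i), 1)))
      ((Finset.univ : Finset (Fin m)).image (fun i => (s(RV.a i, RV.u i), 5))) := by
    rw [Finset.disjoint_right]
    intro e he
    simp only [Finset.mem_image, Finset.mem_univ, true_and] at he
    obtain ⟨x, rfl⟩ := he
    simp [Prod.mk.injEq, Sym2.eq_iff]
  have d5 : Disjoint
      ((Finset.univ : Finset τ).image (fun y => (s(RV.t y, RV.p), 4)) ∪
       (Finset.univ : Finset τ).image (fun y => (s(RV.t y, RV.q), 2)))
      ((Finset.univ : Finset (Fin m)).image (fun i => (s(RV.p, RV.a i), 1))) := by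
    rw [Finset.disjoint_right]
    intro e he
    simp only [Finset.mem_image, Finset.mem_univ, true_and] at he
    obtain ⟨x, rfl⟩ := he
    simp [Prod.mk.injEq, Sym2.eq_iff]
  have d6 : Disjoint
      ((Finset.univ : Finset τ).image (fun y => (s(RV.t y, RV.p), 4)) :
        Finset (Sym2 (RV m τ) × ℕ))
      ((Finset.univ : Finset τ).image (fun y => (s(RV.t y, RV.q), 2))) := by
    rw [Finset.disjoint_right]
    intro e he
    simp only [Finset.mem_image, Finset.mem_univ, true_and] at he
    obtain ⟨x, rfl⟩ := he
    simp [Prod.mk.injEq, Sym2.eq_iff]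
  rw [auxEdges, Finset.card_union_of_disjoint d1, Finset.card_union_of_disjoint d2,
    Finset.card_union_of_disjoint d3, Finset.card_union_of_disjoint d4,
    Finset.card_union_of_disjoint d5, Finset.card_union_of_disjoint d6]
  rw [Finset.card_image_of_injective _ (fun a b h => by simpa [Sym2.eq_iff] using h)]
  rw [Finset.card_image_of_injective _ (fun a b h => by simpa [Sym2.eq_iff] using h)]
  rw [Finset.card_image_of_injective _ (fun a b h => by simpa [Sym2.eq_iff] using h)]
  rw [Finset.card_image_of_injective _ (fun a b h => by simpa [Sym2.eq_iff] using h)]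
  rw [Finset.card_image_of_injective _ (fun a b h => by simpa [Sym2.eq_iff] using h)]
  rw [Finset.card_image_of_injective _ (fun a b h => by simpa [Sym2.eq_iff] using h)]
  rw [Finset.card_insert_of_notMem (by simp [Prod.mk.injEq, Sym2.eq_iff]),
    Finset.card_singleton]
  simp [Finset.card_univ]
  ring

lemma card_gEdges (E₀ : Finset (Fin m × τ)) : (gEdges E₀).card = E₀.card := by
  rw [gEdges]
  rw [Finset.card_image_of_injective _ (by
    intro a b h
    simp only [Prod.mk.injEq, Sym2.eq_iff] at h
    rcases h with ⟨⟨h1, h2⟩ | ⟨h1, h2⟩, -⟩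
    · exact Prod.ext (RV.u.inj h1) (RV.t.inj h2)
    · exact absurd h1 (by simp))]

lemma disj_g_aux (E₀ : Finset (Fin m × τ)) : Disjoint (gEdges E₀) (auxEdges m τ) := by
  rw [Finset.disjoint_left]
  intro e he ha
  simp only [gEdges, Finset.mem_image] at he
  obtain ⟨ed, -, rfl⟩ := he
  simp [auxEdges, Prod.mk.injEq, Sym2.eq_iff] at ha

lemma gEdges_mono {E₀ E : Finset (Fin m × τ)} (h : E₀ ⊆ E) : gEdges E₀ ⊆ gEdges E :=
  Finset.image_subset_image h
end

/-- Let `G` be a connected bipartite graph with terminal part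
`S = Fin m` (`m ≥ 2`) and nonempty non-terminal part `τ`, with edge set `E ⊆ Fin m × τ` and
unit weights, and let `𝒢` be the unit-weight temporal graph `tempEdges E` of the reduction,
with `k = 2|τ| + 4m + 2` added temporal edges.  Then the minimum number of temporal edges of
a temporally connected spanning subgraph of `𝒢` equals `k + OPT`, where `OPT` is the minimum
number of edges of a connected subgraph of `G` spanning all terminals. -/
theorem stmt_14 (m : ℕ) (hm : 2 ≤ m) (τ : Type*)
    [DecidableEq τ] [Fintype τ] [Nonempty τ]
    (E : Finset (Fin m × τ))
    (hGconn : (SteinerGraph E).Connected) :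
    sInf {c : ℕ | ∃ B ⊆ tempEdges E,
        TConnected (↑B : Set (Sym2 (RV m τ) × ℕ)) ∧ B.card = c}
      = (2 * Fintype.card τ + 4 * m + 2) +
        sInf {c : ℕ | ∃ E₀ : Finset (Fin m × τ), SteinerFeasible E E₀ ∧ E₀.card = c} := by
  set k : ℕ := 2 * Fintype.card τ + 4 * m + 2 with hk
  set SSet := {c : ℕ | ∃ E₀ : Finset (Fin m × τ), SteinerFeasible E E₀ ∧ E₀.card = c}
    with hSSet
  set TSet := {c : ℕ | ∃ B ⊆ tempEdges E,
      TConnected (↑B : Set (Sym2 (RV m τ) × ℕ)) ∧ B.card = c} with hTSet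
  -- SSet is nonempty
  have hSne : SSet.Nonempty := by
    refine ⟨E.card, E, ⟨Finset.Subset.refl E, fun v w _ _ => hGconn.preconnected v w⟩, rfl⟩
  -- the optimal Steiner solution
  obtain ⟨E₀, hfeas, hcardE₀⟩ := Nat.sInf_mem hSne
  -- upper bound: k + sInf SSet ∈ TSet
  have hub : k + sInf SSet ∈ TSet := by
    refine ⟨gEdges E₀ ∪ auxEdges m τ, ?_, ?_, ?_⟩
    · apply Finset.union_subset
      · exact (gEdges_mono hfeas.1).trans (Finset.subset_union_left)
      · exact Finset.subset_union_right
    · exact upper_tconn hm hfeas.2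
    · rw [Finset.card_union_of_disjoint (disj_g_aux E₀), card_gEdges, card_aux, hcardE₀]
      omega
  have hTne : TSet.Nonempty := ⟨_, hub⟩
  obtain ⟨B, hB, hTC, hcardB⟩ := Nat.sInf_mem hTne
  -- lower bound
  set E₀' := E.filter (fun ed => (s(RV.u ed.1, RV.t ed.2), 3) ∈ B) with hE₀'
  have hterm : ∀ i j : Fin m, (SteinerGraph E₀').Reachable (Sum.inl i) (Sum.inl j) :=
    fun i j => extract_s14 hB i j (hTC (RV.u i) (RV.u j))
  have hfeas' : SteinerFeasible E E₀' := by
    refine ⟨Finset.filter_subset _ _, ?_⟩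
    have hv : ∀ v, InSub E₀' v → ∃ i, (SteinerGraph E₀').Reachable (Sum.inl i) v := by
      intro v hins
      rcases hins with ⟨i, rfl⟩ | ⟨ed, hed, rfl⟩
      · exact ⟨i, SimpleGraph.Reachable.refl _⟩
      · exact ⟨ed.1, (steiner_adj hed).reachable⟩
    intro v w hinv hinw
    obtain ⟨i, hi⟩ := hv v hinv
    obtain ⟨j, hj⟩ := hv w hinw
    exact (hi.symm.trans (hterm i j)).trans hj
  have hE₀'mem : E₀'.card ∈ SSet := ⟨E₀', hfeas', rfl⟩
  -- all auxiliary edges are in B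
  have i0 : Fin m := ⟨0, by omega⟩
  have hauxB : auxEdges m τ ⊆ B := by
    intro e he
    simp only [auxEdges, Finset.mem_union, Finset.mem_image, Finset.mem_univ, true_and,
      Finset.mem_insert, Finset.mem_singleton] at he
    rcases he with ((((((⟨y, rfl⟩ | ⟨y, rfl⟩) | ⟨i, rfl⟩) | ⟨i, rfl⟩) | ⟨i, rfl⟩) | ⟨i, rfl⟩) |
      (rfl | rfl))
    · exact nec_tp hB y i0 (hTC (RV.a i0) (RV.t y))
    · exact nec_tq hB y (hTC (RV.t y) RV.q)
    · exact nec_pa hB i (hTC RV.x (RV.a i))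
    · exact nec_au hB i (hTC RV.x (RV.u i))
    · exact nec_ub hB i (hTC (RV.u i) RV.q)
    · exact nec_bq hB i (hTC (RV.u i) RV.q)
    · exact nec_px hB (hTC RV.p RV.x)
    · exact nec_xq hB (hTC RV.x RV.q)
  -- B splits into its graph part and the auxiliary part
  have hsplit : B = gEdges E₀' ∪ auxEdges m τ := by
    ext e
    constructor
    · intro heB
      rcases Finset.mem_union.mp (hB heB) with hg | ha
      · refine Finset.mem_union_left _ ?_
        simp only [gEdges, Finset.mem_image] at hg ⊢
        obtain ⟨ed, hed, rfl⟩ := hg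
        exact ⟨ed, Finset.mem_filter.mpr ⟨hed, heB⟩, rfl⟩
      · exact Finset.mem_union_right _ ha
    · intro he
      rcases Finset.mem_union.mp he with hg | ha
      · simp only [gEdges, Finset.mem_image] at hg
        obtain ⟨ed, hed, rfl⟩ := hg
        exact (Finset.mem_filter.mp hed).2
      · exact hauxB ha
  have hcount : B.card = E₀'.card + k := by
    rw [hsplit, Finset.card_union_of_disjoint (disj_g_aux E₀'), card_gEdges, card_aux]
  have hlow : k + sInf SSet ≤ sInf TSet := by
    rw [← hcardB, hcount]
    have := Nat.sInf_le hE₀'mem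
    omega
  exact le_antisymm (Nat.sInf_le hub) hlow
end
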